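/- arXiv:2404.00430 — 3 statements merged into one kernel-verified Lean document; each statement's English description precedes it below -/
import Mathlib

section
/- Let d ≥ 2 and q ∈ (2, ∞). Then V_q(𝒜^1) is unbounded on L^∞(ℝ^d): for every constant C > 0 there exists a bounded measurable, compactly supported function f : ℝ^d → ℝ with ‖f‖_{L^∞(ℝ^d)} > 0 such that the essential supremum over x ∈ ℝ^d of V_q(𝒜^1 f)(x) exceeds C ‖f‖_{L^∞(ℝ^d)}. -/
noncomputable section
open MeasureTheory Complex
open scoped ENNReal NNReal

/-- Generalized spherical mean `A_t^α f (x) = (1/Γ(α)) ∫_{|y|≤1} (1-|y|²)^(α-1) f(x-ty) dy`. -/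
def sphAvg (d : ℕ) (α : ℂ) (f : EuclideanSpace ℝ (Fin d) → ℂ) (t : ℝ)
    (x : EuclideanSpace ℝ (Fin d)) : ℂ :=
  (Complex.Gamma α)⁻¹ *
    ∫ y in Metric.closedBall (0 : EuclideanSpace ℝ (Fin d)) 1,
      ((1 : ℂ) - (‖y‖ : ℂ) ^ 2) ^ (α - 1) * f (x - t • y)

/-- The `q`-variation norm of a family `{a_t}_{t>0}`. -/
def vqNorm (q : ℝ) (a : ℝ → ℂ) : ℝ≥0∞ :=
  ⨆ (L : ℕ) (t : Fin (L + 1) → ℝ) (_ : StrictMono t) (_ : ∀ i, 0 < t i),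
    ENNReal.ofReal ((∑ i : Fin L, ‖a (t i.succ) - a (t i.castSucc)‖ ^ q) ^ (1 / q))

/-- `L^p` norm of an `ℝ≥0∞`-valued function. -/
def lpNormE {X : Type*} [MeasurableSpace X] (p : ℝ) (μ : Measure X) (g : X → ℝ≥0∞) : ℝ≥0∞ :=
  (∫⁻ x, g x ^ p ∂μ) ^ (1 / p)

namespace VarUnbdd

open Metric Set

/-- The radial, alternating-sign function used in the counterexample. -/
def myF (d : ℕ) (z : EuclideanSpace ℝ (Fin d)) : ℝ :=
  if 0 < ‖z‖ ∧ ‖z‖ ≤ 1 then (-1 : ℝ) ^ ⌊Real.logb 4 ‖z‖⁻¹⌋ else 0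

variable {d : ℕ}

lemma myF_eq (k : ℕ) (z : EuclideanSpace ℝ (Fin d))
    (h1 : (4:ℝ) ^ (-(k:ℤ)-1) < ‖z‖) (h2 : ‖z‖ ≤ (4:ℝ) ^ (-(k:ℤ))) :
    myF d z = (-1 : ℝ) ^ k := by
  have h4 : (1:ℝ) < 4 := by norm_num
  have hz0 : 0 < ‖z‖ := lt_trans (zpow_pos (by norm_num) _) h1
  have hz1 : ‖z‖ ≤ 1 := h2.trans (by
    calc (4:ℝ) ^ (-(k:ℤ)) ≤ (4:ℝ) ^ (0:ℤ) := zpow_le_zpow_right₀ h4.le (by omega)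
    _ = 1 := zpow_zero 4)
  have hfloor : ⌊Real.logb 4 ‖z‖⁻¹⌋ = (k:ℤ) := by
    have hiu : ‖z‖⁻¹ < (4:ℝ) ^ ((k:ℤ)+1) := by
      calc ‖z‖⁻¹ < ((4:ℝ) ^ (-(k:ℤ)-1))⁻¹ := by
            rw [inv_lt_inv₀ hz0 (by positivity)] ; exact h1
        _ = (4:ℝ) ^ ((k:ℤ)+1) := by
            rw [← zpow_neg, show (-(-(k:ℤ)-1)) = (k:ℤ)+1 by ring]
    have hil : (4:ℝ) ^ (k:ℤ) ≤ ‖z‖⁻¹ := by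
      calc (4:ℝ) ^ (k:ℤ) = ((4:ℝ) ^ (-(k:ℤ)))⁻¹ := by rw [← zpow_neg, neg_neg]
        _ ≤ ‖z‖⁻¹ := by
            rw [inv_le_inv₀ (by positivity) hz0]; exact h2
    rw [Int.floor_eq_iff]
    constructor
    · calc ((k:ℤ):ℝ) = Real.logb 4 ((4:ℝ) ^ ((k:ℤ):ℝ)) := (Real.logb_rpow (by norm_num) (by norm_num)).symm
        _ ≤ Real.logb 4 ‖z‖⁻¹ := by
            apply Real.logb_le_logb_of_le h4 (by positivity)
            rwa [Real.rpow_intCast]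
    · calc Real.logb 4 ‖z‖⁻¹ < Real.logb 4 ((4:ℝ) ^ (((k:ℤ):ℝ)+1)) := by
            apply Real.logb_lt_logb h4 (by positivity)
            rw [show (((k:ℤ):ℝ)+1) = (((k:ℤ)+1 : ℤ) : ℝ) by push_cast; ring, Real.rpow_intCast]
            exact hiu
        _ = ((k:ℤ):ℝ) + 1 := Real.logb_rpow (by norm_num) (by norm_num)
  rw [myF, if_pos ⟨hz0, hz1⟩, hfloor, zpow_natCast]

lemma abs_myF_le (z : EuclideanSpace ℝ (Fin d)) : |myF d z| ≤ 1 := by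
  rw [myF]
  split
  · rcases Int.even_or_odd ⌊Real.logb 4 ‖z‖⁻¹⌋ with h | h
    · rw [h.neg_one_zpow]; norm_num
    · rw [h.neg_one_zpow]; norm_num
  · simp

lemma myF_meas : Measurable (myF d) := by
  apply Measurable.ite
  · exact (measurableSet_lt measurable_const measurable_norm).inter
      (measurableSet_le measurable_norm measurable_const)
  · have h1 : Measurable fun z : EuclideanSpace ℝ (Fin d) => Real.logb 4 ‖z‖⁻¹ := by
      simp only [Real.logb]
      exact ((Real.measurable_log.comp measurable_norm.inv).div_const _)
    exact (Measurable.of_discrete (f := fun n : ℤ => (-1:ℝ) ^ n)).comp h1.floor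
  · exact measurable_const

lemma myF_supp : HasCompactSupport (myF d) := by
  apply HasCompactSupport.intro (isCompact_closedBall (0 : EuclideanSpace ℝ (Fin d)) 1)
  intro z hz
  rw [mem_closedBall_zero_iff] at hz
  push_neg at hz
  rw [myF, if_neg]
  rintro ⟨-, h⟩; exact absurd h (not_le.2 hz)

/-- volume of the closed unit ball, as `ℝ≥0∞`. -/
def ωe (d : ℕ) : ℝ≥0∞ := volume (Metric.closedBall (0 : EuclideanSpace ℝ (Fin d)) 1)

/-- volume of the closed unit ball, as a real number. -/
def ωr (d : ℕ) : ℝ := (ωe d).toReal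

lemma ωe_pos : 0 < ωe d :=
  lt_of_lt_of_le (measure_ball_pos _ _ one_pos) (measure_mono ball_subset_closedBall)

lemma ωe_lt_top : ωe d < ⊤ := measure_closedBall_lt_top

lemma ωr_pos : 0 < ωr d := ENNReal.toReal_pos ωe_pos.ne' ωe_lt_top.ne

lemma sphAvg_one (f : EuclideanSpace ℝ (Fin d) → ℂ) (t : ℝ) (x : EuclideanSpace ℝ (Fin d)) :
    sphAvg d 1 f t x =
      ∫ y in Metric.closedBall (0 : EuclideanSpace ℝ (Fin d)) 1, f (x - t • y) := by
  simp [sphAvg, Complex.Gamma_one, sub_self, Complex.cpow_zero]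

section Key

variable (hd : 2 ≤ d)
include hd

lemma key (k : ℕ) (x : EuclideanSpace ℝ (Fin d))
    (hx : ‖x‖ ≤ (4:ℝ) ^ (-(k:ℤ)) * (1/(16*d))) :
    ‖(∫ y in Metric.closedBall (0 : EuclideanSpace ℝ (Fin d)) 1,
        (myF d (x - (4:ℝ) ^ (-(k:ℤ)) • y) : ℂ)) - (-1)^k * (ωr d : ℂ)‖ ≤ ωr d / 2 := by
  have hd0 : (0:ℝ) < d := by
    have : (0:ℕ) < d := by omega
    exact_mod_cast this
  set ε : ℝ := 1/(16*d) with hεdef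
  have hε0 : 0 < ε := by positivity
  have hε32 : ε ≤ 1/32 := by
    rw [hεdef]
    rw [div_le_div_iff₀ (by positivity) (by norm_num)]
    have : (2:ℝ) ≤ d := by exact_mod_cast hd
    linarith
  have hdε : (d:ℝ) * ε = 1/16 := by
    rw [hεdef]
    field_simp
  set t : ℝ := (4:ℝ) ^ (-(k:ℤ)) with htdef
  have ht : 0 < t := by positivity
  set S : Set (EuclideanSpace ℝ (Fin d)) := Metric.closedBall (0:EuclideanSpace ℝ (Fin d)) 1 with hSdef
  set B : Set (EuclideanSpace ℝ (Fin d)) := Metric.closedBall (0:EuclideanSpace ℝ (Fin d)) (1/4+ε) ∪ (S \ Metric.ball (0:EuclideanSpace ℝ (Fin d)) (1-ε)) with hBdef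
  have hBmeas : MeasurableSet B :=
    measurableSet_closedBall.union (measurableSet_closedBall.diff measurableSet_ball)
  set g : EuclideanSpace ℝ (Fin d) → ℂ := fun y => (myF d (x - t • y) : ℂ) with hgdef
  set c : ℂ := (-1)^k with hcdef
  have hc1 : ‖c‖ = 1 := by rw [hcdef]; simp
  have hgm : Measurable g := by
    apply Complex.measurable_ofReal.comp
    exact myF_meas.comp (measurable_const.sub (measurable_id.const_smul t))
  have hgb : ∀ y, ‖g y‖ ≤ 1 := by
    intro y
    rw [hgdef]
    simp only [Complex.norm_real]
    exact abs_myF_le _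
  have hIg : IntegrableOn g S volume := by
    have hone : IntegrableOn (fun _ : EuclideanSpace ℝ (Fin d) => (1:ℝ)) S volume :=
      integrableOn_const measure_closedBall_lt_top.ne
    exact Integrable.mono' hone hgm.aestronglyMeasurable (Filter.Eventually.of_forall hgb)
  have hIc : IntegrableOn (fun _ : EuclideanSpace ℝ (Fin d) => c) S volume :=
    integrableOn_const measure_closedBall_lt_top.ne
  -- rewrite as integral of g - c
  have hconst : (∫ _ in S, c ∂volume) = (ωr d : ℂ) * c := by
    rw [setIntegral_const, ωr, ωe, ← hSdef, Complex.real_smul, Measure.real_def]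
  have hsplit : (∫ y in S, g y ∂volume) - (-1)^k * (ωr d : ℂ) = ∫ y in S, (g y - c) ∂volume := by
    rw [integral_sub hIg hIc, hconst, ← hcdef]
    ring
  rw [hsplit]
  -- split off the bad set
  have hIgc : IntegrableOn (fun y => g y - c) S volume := hIg.sub hIc
  have hdecomp : (∫ y in S, (g y - c) ∂volume) =
      (∫ y in S ∩ B, (g y - c) ∂volume) + ∫ y in S \ B, (g y - c) ∂volume :=
    (integral_inter_add_diff hBmeas hIgc).symm
  have hgood : (∫ y in S \ B, (g y - c) ∂volume) = 0 := by
    apply setIntegral_eq_zero_of_forall_eq_zero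
    intro y hy
    obtain ⟨hyS, hyB⟩ := hy
    rw [hSdef, mem_closedBall_zero_iff] at hyS
    rw [hBdef, mem_union, not_or] at hyB
    obtain ⟨hy1, hy2⟩ := hyB
    rw [mem_closedBall_zero_iff, not_le] at hy1
    have hy3 : ‖y‖ < 1 - ε := by
      by_contra hcon
      rw [not_lt] at hcon
      exact hy2 ⟨by rw [hSdef, mem_closedBall_zero_iff]; exact hyS,
        fun hb => absurd (mem_ball_zero_iff.1 hb) (not_lt.2 hcon)⟩
    have hnorm_smul : ‖t • y‖ = t * ‖y‖ := by
      rw [norm_smul, Real.norm_eq_abs, abs_of_pos ht]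
    have hupper : ‖x - t • y‖ ≤ (4:ℝ) ^ (-(k:ℤ)) := by
      calc ‖x - t • y‖ ≤ ‖x‖ + ‖t • y‖ := norm_sub_le _ _
        _ ≤ t * ε + t * (1-ε) := by
            rw [hnorm_smul]
            have := mul_le_mul_of_nonneg_left hy3.le ht.le
            have hx' : ‖x‖ ≤ t * ε := hx
            linarith
        _ = t := by ring
    have hlower : (4:ℝ) ^ (-(k:ℤ)-1) < ‖x - t • y‖ := by
      have h1 : t * ‖y‖ - ‖x‖ ≤ ‖x - t • y‖ := by
        calc t * ‖y‖ - ‖x‖ = ‖t • y‖ - ‖x‖ := by rw [hnorm_smul]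
          _ ≤ ‖t • y - x‖ := norm_sub_norm_le _ _
          _ = ‖x - t • y‖ := norm_sub_rev _ _
      have h2 : t * (1/4 + ε) < t * ‖y‖ := mul_lt_mul_of_pos_left hy1 ht
      have h3 : (4:ℝ) ^ (-(k:ℤ)-1) = t / 4 := by
        rw [htdef, zpow_sub_one₀ (by norm_num : (4:ℝ) ≠ 0)]
        ring
      have hx' : ‖x‖ ≤ t * ε := hx
      rw [h3]
      linarith
    have : myF d (x - t • y) = (-1:ℝ)^k := myF_eq k _ hlower hupper
    rw [hgdef]
    simp only [this, hcdef]
    push_cast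
    ring
  have hbad : ‖∫ y in S ∩ B, (g y - c) ∂volume‖ ≤ 2 * (volume (S ∩ B)).toReal := by
    apply norm_setIntegral_le_of_norm_le_const
    · exact lt_of_le_of_lt (measure_mono inter_subset_left) measure_closedBall_lt_top
    · intro y _
      calc ‖g y - c‖ ≤ ‖g y‖ + ‖c‖ := norm_sub_le _ _
        _ ≤ 1 + 1 := by rw [hc1]; exact add_le_add_left (hgb y) 1
        _ = 2 := by norm_num
  -- volume estimate
  have hvol : volume (S ∩ B) ≤ ENNReal.ofReal (1/4) * ωe d := by
    haveI : Nontrivial (EuclideanSpace ℝ (Fin d)) := by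
      refine ⟨0, EuclideanSpace.single (⟨0, by omega⟩ : Fin d) (1:ℝ), fun h => ?_⟩
      have h1 : ‖EuclideanSpace.single (⟨0, by omega⟩ : Fin d) (1:ℝ)‖ = 1 := by
        rw [EuclideanSpace.norm_single]; norm_num
      rw [← h, norm_zero] at h1
      norm_num at h1
    have hr2nn : 0 ≤ (1-ε)^d := pow_nonneg (by linarith) d
    have hr2le : (1-ε)^d ≤ 1 := by
      apply pow_le_one₀ (by linarith)
      linarith
    have hV1 : volume (Metric.closedBall (0:EuclideanSpace ℝ (Fin d)) (1/4+ε)) =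
        ENNReal.ofReal ((1/4+ε)^d) * ωe d := by
      rw [Measure.addHaar_closedBall' volume (0:EuclideanSpace ℝ (Fin d)) (by linarith), finrank_euclideanSpace_fin]
      rfl
    have hball_eq : volume (Metric.ball (0:EuclideanSpace ℝ (Fin d)) 1) = ωe d :=
      (Measure.addHaar_closedBall_eq_addHaar_ball volume _ _).symm
    have hV2 : volume (Metric.ball (0:EuclideanSpace ℝ (Fin d)) (1-ε)) = ENNReal.ofReal ((1-ε)^d) * ωe d := by
      rw [Measure.addHaar_ball volume (0:EuclideanSpace ℝ (Fin d)) (by linarith), finrank_euclideanSpace_fin, hball_eq]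
    have hsub : Metric.ball (0:EuclideanSpace ℝ (Fin d)) (1-ε) ⊆ S := by
      rw [hSdef]
      exact (Metric.ball_subset_closedBall).trans
        (Metric.closedBall_subset_closedBall (by linarith))
    have hdiff : volume (S \ Metric.ball (0:EuclideanSpace ℝ (Fin d)) (1-ε)) = ωe d - ENNReal.ofReal ((1-ε)^d) * ωe d := by
      rw [measure_diff hsub measurableSet_ball.nullMeasurableSet
        (ne_of_lt measure_ball_lt_top), hV2]
      rfl
    have hV2' : volume (S \ Metric.ball (0:EuclideanSpace ℝ (Fin d)) (1-ε)) ≤ ENNReal.ofReal (1-(1-ε)^d) * ωe d := by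
      rw [hdiff, tsub_le_iff_right, ← add_mul, ← ENNReal.ofReal_add (by linarith) hr2nn]
      rw [show (1-(1-ε)^d) + (1-ε)^d = 1 by ring]
      simp
    calc volume (S ∩ B) ≤ volume B := measure_mono inter_subset_right
      _ ≤ volume (Metric.closedBall (0:EuclideanSpace ℝ (Fin d)) (1/4+ε)) + volume (S \ Metric.ball (0:EuclideanSpace ℝ (Fin d)) (1-ε)) :=
          measure_union_le _ _
      _ ≤ ENNReal.ofReal ((1/4+ε)^d) * ωe d + ENNReal.ofReal (1-(1-ε)^d) * ωe d := by
          rw [hV1]; exact add_le_add_right hV2' _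
      _ = ENNReal.ofReal ((1/4+ε)^d + (1-(1-ε)^d)) * ωe d := by
          rw [← add_mul, ← ENNReal.ofReal_add (by positivity) (by linarith)]
      _ ≤ ENNReal.ofReal (1/4) * ωe d := by
          apply mul_le_mul_left
          apply ENNReal.ofReal_le_ofReal
          have e1 : (1/4+ε)^d ≤ 81/1024 := by
            calc (1/4+ε)^d ≤ (9/32:ℝ)^d := by
                  apply pow_le_pow_left₀ (by positivity) (by linarith)
              _ ≤ (9/32:ℝ)^2 := by
                  apply pow_le_pow_of_le_one (by norm_num) (by norm_num) hd
              _ = 81/1024 := by norm_num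
          have e2 : 1-(1-ε)^d ≤ 1/16 := by
            have := one_add_mul_le_pow (a := -ε) (by linarith) d
            rw [show (1:ℝ) + -ε = 1 - ε by ring] at this
            have : 1 + (d:ℝ) * (-ε) ≤ (1-ε)^d := this
            rw [show (d:ℝ) * (-ε) = -((d:ℝ)*ε) by ring, hdε] at this
            linarith
          linarith
  -- wrap up
  have hfin : ENNReal.ofReal (1/4) * ωe d ≠ ⊤ := ENNReal.mul_ne_top ENNReal.ofReal_ne_top ωe_lt_top.ne
  have hvolr : (volume (S ∩ B)).toReal ≤ (1/4) * ωr d := by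
    have := ENNReal.toReal_mono hfin hvol
    rwa [ENNReal.toReal_mul, ENNReal.toReal_ofReal (by norm_num)] at this
  calc ‖∫ y in S, (g y - c) ∂volume‖
      = ‖∫ y in S ∩ B, (g y - c) ∂volume‖ := by rw [hdecomp, hgood, add_zero]
    _ ≤ 2 * (volume (S ∩ B)).toReal := hbad
    _ ≤ 2 * ((1/4) * ωr d) := by linarith
    _ = ωr d / 2 := by ring

lemma diff_ge (k : ℕ) (x : EuclideanSpace ℝ (Fin d))
    (hx : ‖x‖ ≤ (4:ℝ) ^ (-(k:ℤ)-1) * (1/(16*d))) :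
    ωr d ≤ ‖sphAvg d 1 (fun y => (myF d y : ℂ)) ((4:ℝ) ^ (-(k:ℤ)-1)) x -
      sphAvg d 1 (fun y => (myF d y : ℂ)) ((4:ℝ) ^ (-(k:ℤ))) x‖ := by
  have hω : 0 < ωr d := ωr_pos
  have hε0 : (0:ℝ) < 1/(16*d) := by
    have : (0:ℕ) < d := by omega
    have : (0:ℝ) < d := by exact_mod_cast this
    positivity
  have hxk : ‖x‖ ≤ (4:ℝ) ^ (-(k:ℤ)) * (1/(16*d)) := by
    refine hx.trans (mul_le_mul_of_nonneg_right ?_ hε0.le)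
    exact zpow_le_zpow_right₀ (by norm_num) (by omega)
  have hxk1 : ‖x‖ ≤ (4:ℝ) ^ (-((k+1:ℕ):ℤ)) * (1/(16*d)) := by
    convert hx using 3
    push_cast
    ring
  have h1 := key hd k x hxk
  have h2 := key hd (k+1) x hxk1
  rw [sphAvg_one, sphAvg_one]
  set a : ℂ := ∫ y in Metric.closedBall (0 : EuclideanSpace ℝ (Fin d)) 1,
      (myF d (x - (4:ℝ) ^ (-(k:ℤ)) • y) : ℂ) with hadef
  set b : ℂ := ∫ y in Metric.closedBall (0 : EuclideanSpace ℝ (Fin d)) 1,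
      (myF d (x - (4:ℝ) ^ (-(k:ℤ)-1) • y) : ℂ) with hbdef
  have hb' : ‖b - (-1)^(k+1) * (ωr d : ℂ)‖ ≤ ωr d / 2 := by
    convert h2 using 4
    push_cast
    ring
  have ha' : ‖a - (-1)^k * (ωr d : ℂ)‖ ≤ ωr d / 2 := h1
  have hUV : ‖(-1:ℂ)^(k+1) * (ωr d : ℂ) - (-1)^k * (ωr d : ℂ)‖ = 2 * ωr d := by
    have : (-1:ℂ)^(k+1) * (ωr d : ℂ) - (-1)^k * (ωr d : ℂ) = (-1)^(k+1) * (2 * ωr d : ℝ) := by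
      push_cast
      ring
    rw [this, norm_mul, norm_pow, norm_neg, norm_one, one_pow, one_mul, Complex.norm_real,
      Real.norm_eq_abs, _root_.abs_of_nonneg (by linarith)]
  have htri : ‖(-1:ℂ)^(k+1) * (ωr d : ℂ) - (-1)^k * (ωr d : ℂ)‖ ≤
      ‖b - a‖ + ‖b - (-1)^(k+1) * (ωr d : ℂ)‖ + ‖a - (-1)^k * (ωr d : ℂ)‖ := by
    calc ‖(-1:ℂ)^(k+1) * (ωr d : ℂ) - (-1)^k * (ωr d : ℂ)‖
        = ‖(((-1:ℂ)^(k+1) * (ωr d : ℂ) - b) + (b - a)) + (a - (-1)^k * (ωr d : ℂ))‖ := by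
          congr 1; ring
      _ ≤ ‖((-1:ℂ)^(k+1) * (ωr d : ℂ) - b) + (b - a)‖ + ‖a - (-1)^k * (ωr d : ℂ)‖ :=
          norm_add_le _ _
      _ ≤ ‖(-1:ℂ)^(k+1) * (ωr d : ℂ) - b‖ + ‖b - a‖ + ‖a - (-1)^k * (ωr d : ℂ)‖ := by
          exact add_le_add_left (norm_add_le _ _) _
      _ = ‖b - a‖ + ‖b - (-1)^(k+1) * (ωr d : ℂ)‖ + ‖a - (-1)^k * (ωr d : ℂ)‖ := by
          rw [norm_sub_rev ((-1:ℂ)^(k+1) * (ωr d : ℂ)) b]; ring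
  rw [hUV] at htri
  linarith

lemma vq_ge {q : ℝ} (hq : 2 < q) (m : ℕ) (x : EuclideanSpace ℝ (Fin d))
    (hx : ‖x‖ ≤ (4:ℝ) ^ (-(m:ℤ)) * (1/(16*d))) :
    ENNReal.ofReal ((m:ℝ) ^ (1/q) * ωr d) ≤
      vqNorm q (fun t => sphAvg d 1 (fun y => (myF d y : ℂ)) t x) := by
  have hq0 : 0 < q := by linarith
  have hω : 0 < ωr d := ωr_pos
  have hε0 : (0:ℝ) < 1/(16*d) := by
    have : (0:ℕ) < d := by omega
    have : (0:ℝ) < d := by exact_mod_cast this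
    positivity
  set a : ℝ → ℂ := fun t => sphAvg d 1 (fun y => (myF d y : ℂ)) t x with hadef
  set T : Fin (m+1) → ℝ := fun i => (4:ℝ) ^ ((i:ℤ) - m) with hTdef
  have hmono : StrictMono T := by
    intro i j hij
    apply zpow_lt_zpow_right₀ (by norm_num)
    have : (i:ℕ) < (j:ℕ) := hij
    omega
  have hpos : ∀ i, 0 < T i := fun i => by positivity
  -- each increment is at least ωr d
  have hterm : ∀ i : Fin m, ωr d ≤ ‖a (T i.succ) - a (T i.castSucc)‖ := by
    intro i
    have him : (i:ℕ) < m := i.isLt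
    set k : ℕ := m - 1 - i with hkdef
    have hk1 : ((i.castSucc : Fin (m+1)) : ℤ) - m = -(k:ℤ) - 1 := by
      simp only [Fin.coe_castSucc]
      omega
    have hk2 : ((i.succ : Fin (m+1)) : ℤ) - m = -(k:ℤ) := by
      simp only [Fin.val_succ]
      push_cast
      omega
    have hxk : ‖x‖ ≤ (4:ℝ) ^ (-(k:ℤ)-1) * (1/(16*d)) := by
      refine hx.trans (mul_le_mul_of_nonneg_right ?_ hε0.le)
      apply zpow_le_zpow_right₀ (by norm_num)
      omega
    have hdg := diff_ge hd k x hxk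
    have hT1 : T i.castSucc = (4:ℝ) ^ (-(k:ℤ)-1) := by rw [hTdef]; simp only; rw [hk1]
    have hT2 : T i.succ = (4:ℝ) ^ (-(k:ℤ)) := by rw [hTdef]; simp only; rw [hk2]
    rw [hT1, hT2, norm_sub_rev]
    exact hdg
  have hsum : (m:ℝ) * (ωr d) ^ q ≤ ∑ i : Fin m, ‖a (T i.succ) - a (T i.castSucc)‖ ^ q := by
    have h1 : ∀ i : Fin m, i ∈ Finset.univ → (ωr d) ^ q ≤ ‖a (T i.succ) - a (T i.castSucc)‖ ^ q := by
      intro i _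
      exact Real.rpow_le_rpow hω.le (hterm i) hq0.le
    have h2 := Finset.card_nsmul_le_sum Finset.univ _ _ h1
    rwa [Finset.card_univ, Fintype.card_fin, nsmul_eq_mul] at h2
  have hsum_nn : (0:ℝ) ≤ (m:ℝ) * (ωr d) ^ q := by positivity
  have hqinv : ((ωr d) ^ q) ^ (1/q) = ωr d := by
    rw [← Real.rpow_mul hω.le, mul_one_div_cancel (ne_of_gt hq0), Real.rpow_one]
  have hrpow : ((m:ℝ) * (ωr d) ^ q) ^ (1/q) = (m:ℝ) ^ (1/q) * ωr d := by
    rw [Real.mul_rpow (Nat.cast_nonneg m) (Real.rpow_nonneg hω.le q), hqinv]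
  have hfinal : (m:ℝ) ^ (1/q) * ωr d ≤
      (∑ i : Fin m, ‖a (T i.succ) - a (T i.castSucc)‖ ^ q) ^ (1/q) := by
    rw [← hrpow]
    exact Real.rpow_le_rpow hsum_nn hsum (by positivity)
  calc ENNReal.ofReal ((m:ℝ) ^ (1/q) * ωr d)
      ≤ ENNReal.ofReal ((∑ i : Fin m, ‖a (T i.succ) - a (T i.castSucc)‖ ^ q) ^ (1/q)) :=
        ENNReal.ofReal_le_ofReal hfinal
    _ ≤ vqNorm q a := by
        apply le_iSup_of_le m
        apply le_iSup_of_le T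
        apply le_iSup_of_le hmono
        exact le_iSup_of_le hpos le_rfl

end Key

lemma exists_m {q : ℝ} (hq : 2 < q) {w : ℝ} (hw : 0 < w) (c : ℝ) :
    ∃ m : ℕ, c ≤ (m:ℝ) ^ (1/q) * w := by
  have hq0 : 0 < q := by linarith
  set b : ℝ := max c 0 / w with hbdef
  have hb0 : 0 ≤ b := div_nonneg (le_max_right c 0) hw.le
  refine ⟨⌈b ^ q⌉₊, ?_⟩
  have h1 : b ^ q ≤ (⌈b ^ q⌉₊ : ℝ) := Nat.le_ceil _
  have h2 : b = (b ^ q) ^ (1/q) := by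
    rw [← Real.rpow_mul hb0, mul_one_div_cancel (ne_of_gt hq0), Real.rpow_one]
  have h3 : b ≤ (⌈b ^ q⌉₊ : ℝ) ^ (1/q) :=
    h2.trans_le (Real.rpow_le_rpow (Real.rpow_nonneg hb0 q) h1 (by positivity))
  have h4 : b * w ≤ (⌈b ^ q⌉₊ : ℝ) ^ (1/q) * w := mul_le_mul_of_nonneg_right h3 hw.le
  have h5 : b * w = max c 0 := div_mul_cancel₀ _ (ne_of_gt hw)
  calc c ≤ max c 0 := le_max_left c 0
    _ = b * w := h5.symm
    _ ≤ _ := h4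

end VarUnbdd

theorem variation_unbounded_Linfty_alpha_one (d : ℕ) (hd : 2 ≤ d) (q : ℝ) (hq1 : 2 < q) :
    ∀ C > 0, ∃ f : EuclideanSpace ℝ (Fin d) → ℝ,
      Measurable f ∧ HasCompactSupport f ∧ (∃ M : ℝ, ∀ x, |f x| ≤ M) ∧
      0 < eLpNorm f ∞ volume ∧
      ENNReal.ofReal C * eLpNorm f ∞ volume <
        essSup (fun x => vqNorm q (fun t => sphAvg d 1 (fun y => (f y : ℂ)) t x)) volume := by
  intro C hC
  refine ⟨VarUnbdd.myF d, VarUnbdd.myF_meas, VarUnbdd.myF_supp, ⟨1, VarUnbdd.abs_myF_le⟩, ?_, ?_⟩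
  · -- positive L^∞ norm
    rw [pos_iff_ne_zero]
    intro h0
    have hmeas : AEStronglyMeasurable (VarUnbdd.myF d) volume :=
      VarUnbdd.myF_meas.aestronglyMeasurable
    have hf0 : VarUnbdd.myF d =ᵐ[volume] 0 :=
      (eLpNorm_eq_zero_iff hmeas (by norm_num)).1 h0
    set p : EuclideanSpace ℝ (Fin d) := EuclideanSpace.single (⟨0, by omega⟩ : Fin d) (1/2 : ℝ)
      with hpdef
    have hpn : ‖p‖ = 1/2 := by
      rw [hpdef, EuclideanSpace.norm_single]
      norm_num
    have hsub : Metric.ball p (1/8) ⊆ {z | ¬ VarUnbdd.myF d z = 0} := by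
      intro z hz
      rw [Metric.mem_ball, dist_eq_norm] at hz
      have h1 : |‖z‖ - ‖p‖| ≤ ‖z - p‖ := abs_norm_sub_norm_le _ _
      rw [hpn] at h1
      have h2 : 3/8 < ‖z‖ ∧ ‖z‖ < 5/8 := by
        rw [abs_le] at h1
        constructor <;> linarith [h1.1, h1.2]
      have h3 : VarUnbdd.myF d z = (-1:ℝ)^0 := by
        apply VarUnbdd.myF_eq 0 z
        · norm_num
          linarith [h2.1]
        · norm_num
          linarith [h2.2]
      simp only [pow_zero] at h3
      simp [h3]
    have h0' : volume {z : EuclideanSpace ℝ (Fin d) | ¬ VarUnbdd.myF d z = 0} = 0 := by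
      have := hf0
      rw [Filter.EventuallyEq, ae_iff] at this
      simpa using this
    have := measure_mono_null hsub h0'
    exact absurd this (ne_of_gt (Metric.measure_ball_pos volume p (by norm_num)))
  · -- the essential supremum is infinite
    have hωr : 0 < VarUnbdd.ωr d := VarUnbdd.ωr_pos
    set g : EuclideanSpace ℝ (Fin d) → ℝ≥0∞ :=
      fun x => vqNorm q (fun t => sphAvg d 1 (fun y => ((VarUnbdd.myF d y : ℝ) : ℂ)) t x)
      with hgdef
    have hgtop : essSup g volume = ⊤ := by
      by_contra h
      obtain ⟨n, hn⟩ := ENNReal.exists_nat_gt h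
      obtain ⟨m, hm⟩ := VarUnbdd.exists_m hq1 hωr (n : ℝ)
      have hd0 : (0:ℝ) < d := by
        have : (0:ℕ) < d := by omega
        exact_mod_cast this
      set δ : ℝ := (4:ℝ) ^ (-(m:ℤ)) * (1/(16*d)) with hδdef
      have hδ : 0 < δ := by positivity
      have hball : Metric.ball (0 : EuclideanSpace ℝ (Fin d)) δ ⊆
          {x | ¬ g x ≤ essSup g volume} := by
        intro x hx hle
        rw [Metric.mem_ball, dist_zero_right] at hx
        have h1 : ENNReal.ofReal ((m:ℝ) ^ (1/q) * VarUnbdd.ωr d) ≤ g x :=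
          VarUnbdd.vq_ge hd hq1 m x hx.le
        have h2 : (n : ℝ≥0∞) ≤ g x := by
          refine le_trans ?_ h1
          rw [← ENNReal.ofReal_natCast n]
          exact ENNReal.ofReal_le_ofReal hm
        exact absurd (lt_of_le_of_lt (h2.trans hle) hn) (lt_irrefl _)
      have h0 : volume {x : EuclideanSpace ℝ (Fin d) | ¬ g x ≤ essSup g volume} = 0 := by
        have hae := ENNReal.ae_le_essSup (μ := volume) g
        simpa [ae_iff] using hae
      have := measure_mono_null hball h0
      exact absurd this (ne_of_gt (Metric.measure_ball_pos volume _ hδ))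
    rw [hgdef] at hgtop
    rw [hgtop]
    have hbound : eLpNorm (VarUnbdd.myF d) ∞ volume ≤ ENNReal.ofReal 1 := by
      rw [eLpNorm_exponent_top]
      exact eLpNormEssSup_le_of_ae_bound (C := 1) (Filter.Eventually.of_forall (fun x => by
        rw [Real.norm_eq_abs]; exact VarUnbdd.abs_myF_le x))
    exact ENNReal.mul_lt_top ENNReal.ofReal_lt_top (lt_of_le_of_lt hbound ENNReal.ofReal_lt_top)
end
end

section
/- Let d ≥ 2, let q ∈ (2, ∞), and let α ∈ ℂ with Re α > 0 and α ≠ 1. Then V_q(𝒜^α) is unbounded on L^∞(ℝ^d): for every constant C > 0 there exists a bounded measurable, compactly supported function f : ℝ^d → ℂ with ‖f‖_{L^∞(ℝ^d)} > 0 such that the essential supremum over x ∈ ℝ^d of V_q(𝒜^α f)(x) exceeds C ‖f‖_{L^∞(ℝ^d)}. -/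
noncomputable section
open MeasureTheory Complex
open scoped ENNReal NNReal

open Set Metric
open scoped Real

lemma measurable_cpow_const (c : ℂ) : Measurable (fun x : ℂ => x ^ c) := by
  have h : (fun x : ℂ => x ^ c)
      = fun x => if x = 0 then (if c = 0 then 1 else 0) else Complex.exp (Complex.log x * c) := by
    funext x; rw [Complex.cpow_def]
  rw [h]
  exact Measurable.ite (measurableSet_eq) measurable_const
    ((Complex.measurable_log.mul_const c).cexp)

lemma lintegral_fun_norm_addHaar' {E : Type*} [NormedAddCommGroup E] [NormedSpace ℝ E]
    [Nontrivial E] [MeasurableSpace E] [BorelSpace E] [FiniteDimensional ℝ E]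
    (μ : Measure E) [μ.IsAddHaarMeasure] (g : ℝ → ℝ≥0∞) (hg : Measurable g) :
    ∫⁻ x, g ‖x‖ ∂μ
      = μ.toSphere Set.univ *
        ∫⁻ r in Ioi (0:ℝ), ENNReal.ofReal (r ^ (Module.finrank ℝ E - 1)) * g r := by
  have h0 : ∫⁻ x, g ‖x‖ ∂μ = ∫⁻ x : ({0}ᶜ : Set E), g ‖(x : E)‖ ∂(μ.comap (↑)) := by
    rw [lintegral_subtype_comap (measurableSet_singleton (0:E)).compl (fun y => g ‖y‖),
      MeasureTheory.restrict_compl_singleton]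
  have h1 := (μ.measurePreserving_homeomorphUnitSphereProd).lintegral_comp_emb
      (Homeomorph.measurableEmbedding _) (fun p : sphere (0:E) 1 × Ioi (0:ℝ) => g p.2)
  simp only [homeomorphUnitSphereProd_apply_snd_coe] at h1
  rw [h0, h1]
  have hmeas : Measurable (fun p : sphere (0:E) 1 × Ioi (0:ℝ) => g p.2) :=
    hg.comp (measurable_subtype_coe.comp measurable_snd)
  rw [MeasureTheory.lintegral_prod _ hmeas.aemeasurable]
  have hin : (∫⁻ y : Ioi (0:ℝ), g y ∂(Measure.volumeIoiPow (Module.finrank ℝ E - 1)))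
        = ∫⁻ r in Ioi (0:ℝ), ENNReal.ofReal (r ^ (Module.finrank ℝ E - 1)) * g r := by
    rw [Measure.volumeIoiPow, lintegral_withDensity_eq_lintegral_mul
      (Measure.comap Subtype.val volume)
      ((measurable_subtype_coe.pow_const _).ennreal_ofReal)
      (g := fun y : Ioi (0:ℝ) => g ↑y) (hg.comp measurable_subtype_coe)]
    simp only [Pi.mul_apply]
    rw [lintegral_subtype_comap measurableSet_Ioi
      (fun r => ENNReal.ofReal (r ^ (Module.finrank ℝ E - 1)) * g r)]
  simp only [Prod.snd]
  rw [hin, lintegral_const, mul_comm]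

/-- The witness function: `‖u‖^I` on the closed unit ball. -/
def ff (d : ℕ) : EuclideanSpace ℝ (Fin d) → ℂ :=
  (Metric.closedBall (0 : EuclideanSpace ℝ (Fin d)) 1).indicator
    (fun u => ((‖u‖ : ℝ) : ℂ) ^ (I : ℂ))

lemma ff_eq {d : ℕ} {u : EuclideanSpace ℝ (Fin d)} (hu : ‖u‖ ≤ 1) :
    ff d u = ((‖u‖ : ℝ) : ℂ) ^ (I : ℂ) :=
  Set.indicator_of_mem (by simpa [mem_closedBall_zero_iff] using hu) _

lemma ff_meas (d : ℕ) : Measurable (ff d) :=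
  (((measurable_cpow_const I).comp
    (Complex.measurable_ofReal.comp measurable_norm))).indicator measurableSet_closedBall

lemma ff_norm_le (d : ℕ) (u : EuclideanSpace ℝ (Fin d)) : ‖ff d u‖ ≤ 1 := by
  by_cases hu : ‖u‖ ≤ 1
  · rw [ff_eq hu]
    rcases eq_or_lt_of_le (norm_nonneg u) with h0 | h0
    · simp [← h0, Complex.zero_cpow Complex.I_ne_zero]
    · rw [Complex.norm_cpow_eq_rpow_re_of_pos h0]
      simp
  · rw [ff, Set.indicator_of_notMem (by simpa [mem_closedBall_zero_iff] using hu)]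
    simp

lemma ff_compact_support (d : ℕ) : HasCompactSupport (ff d) := by
  apply HasCompactSupport.intro (isCompact_closedBall (0 : EuclideanSpace ℝ (Fin d)) 1)
  intro x hx
  exact Set.indicator_of_notMem hx _

lemma oneD_lt_top {s : ℝ} (hs : -1 < s) :
    ∫⁻ r in Ioo (0:ℝ) 1, ENNReal.ofReal ((1 - r) ^ s) < ⊤ := by
  have h1 : IntervalIntegrable (fun x : ℝ => x ^ s) volume 0 1 :=
    intervalIntegral.intervalIntegrable_rpow' hs
  have h2 : IntervalIntegrable (fun x : ℝ => (1 - x) ^ s) volume 0 1 := by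
    simpa using (h1.comp_sub_left 1).symm
  have h3 : IntegrableOn (fun x : ℝ => (1 - x) ^ s) (Ioo (0:ℝ) 1) volume :=
    (h2.1).mono_set Set.Ioo_subset_Ioc_self
  calc ∫⁻ r in Ioo (0:ℝ) 1, ENNReal.ofReal ((1 - r) ^ s)
      ≤ ∫⁻ r in Ioo (0:ℝ) 1, ‖(1 - r) ^ s‖₊ :=
        lintegral_mono fun r => ENNReal.ofReal_le_of_le_toReal (by simp [Real.norm_eq_abs, le_abs_self])
    _ < ⊤ := h3.2

lemma wInt (d : ℕ) (hd : 0 < d) (α : ℂ) (hα : 0 < α.re) (hα1 : α ≠ 1) :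
    IntegrableOn (fun y : EuclideanSpace ℝ (Fin d) => ((1 : ℂ) - (‖y‖ : ℂ) ^ 2) ^ (α - 1))
      (Metric.closedBall 0 1) volume := by
  haveI : Nonempty (Fin d) := ⟨⟨0, hd⟩⟩
  haveI : Nontrivial (EuclideanSpace ℝ (Fin d)) := inferInstance
  set s : ℝ := α.re - 1 with hsdef
  have hs : -1 < s := by simp only [hsdef]; linarith
  have hmw : Measurable (fun y : EuclideanSpace ℝ (Fin d) =>
      ((1 : ℂ) - (‖y‖ : ℂ) ^ 2) ^ (α - 1)) :=
    (measurable_const.sub ((Complex.measurable_ofReal.comp measurable_norm).pow_const 2)).pow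
      measurable_const
  constructor
  · exact hmw.aestronglyMeasurable
  · -- finite integral
    set g : ℝ → ℝ≥0∞ :=
      fun r => Set.indicator (Ico (0:ℝ) 1) (fun r => ENNReal.ofReal ((1 - r ^ 2) ^ s)) r with hgdef
    have hgmeas : Measurable g := by
      apply Measurable.indicator _ measurableSet_Ico
      exact ((measurable_const.sub (measurable_id.pow_const 2)).pow measurable_const).ennreal_ofReal
    have hbound : ∀ y ∈ Metric.closedBall (0 : EuclideanSpace ℝ (Fin d)) 1,
        (‖((1 : ℂ) - (‖y‖ : ℂ) ^ 2) ^ (α - 1)‖₊ : ℝ≥0∞) ≤ g ‖y‖ := by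
      intro y hy
      rw [mem_closedBall_zero_iff] at hy
      rcases lt_or_eq_of_le hy with h1 | h1
      · have hpos : (0:ℝ) < 1 - ‖y‖ ^ 2 := by nlinarith [norm_nonneg y]
        have hbase : ((1 : ℂ) - (‖y‖ : ℂ) ^ 2) = (((1 - ‖y‖ ^ 2 : ℝ)) : ℂ) := by push_cast; ring
        have : ‖((1 : ℂ) - (‖y‖ : ℂ) ^ 2) ^ (α - 1)‖ = (1 - ‖y‖ ^ 2) ^ s := by
          rw [hbase, Complex.norm_cpow_eq_rpow_re_of_pos hpos]
          simp [hsdef]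
        have hmem : ‖y‖ ∈ Ico (0:ℝ) 1 := ⟨norm_nonneg y, h1⟩
        rw [← enorm_eq_nnnorm, ← ofReal_norm_eq_enorm, this, hgdef]
        simp only [Set.indicator_of_mem hmem, le_refl]
      · have : ((1 : ℂ) - (‖y‖ : ℂ) ^ 2) = 0 := by rw [h1]; norm_num
        rw [this, Complex.zero_cpow (sub_ne_zero.mpr hα1)]
        simp
    calc ∫⁻ y in Metric.closedBall (0 : EuclideanSpace ℝ (Fin d)) 1,
          (‖((1 : ℂ) - (‖y‖ : ℂ) ^ 2) ^ (α - 1)‖₊ : ℝ≥0∞) ∂volume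
        ≤ ∫⁻ y in Metric.closedBall (0 : EuclideanSpace ℝ (Fin d)) 1, g ‖y‖ ∂volume :=
          setLIntegral_mono (hgmeas.comp measurable_norm) hbound
      _ ≤ ∫⁻ y, g ‖y‖ ∂volume := setLIntegral_le_lintegral _ _
      _ = (volume : Measure (EuclideanSpace ℝ (Fin d))).toSphere Set.univ *
            ∫⁻ r in Ioi (0:ℝ), ENNReal.ofReal (r ^ (d - 1)) * g r := by
          rw [lintegral_fun_norm_addHaar' volume g hgmeas, finrank_euclideanSpace_fin]
      _ < ⊤ := by
          apply ENNReal.mul_lt_top (measure_lt_top _ _)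
          set M : ℝ := max ((2:ℝ) ^ s) 1 with hMdef
          have hM0 : 0 ≤ M := le_trans zero_le_one (le_max_right _ _)
          calc ∫⁻ r in Ioi (0:ℝ), ENNReal.ofReal (r ^ (d - 1)) * g r
              ≤ ∫⁻ r in Ioi (0:ℝ),
                  Set.indicator (Ioo (0:ℝ) 1) (fun r => ENNReal.ofReal (M * (1 - r) ^ s)) r := by
                apply setLIntegral_mono
                  (Measurable.indicator (((measurable_const.sub measurable_id).pow
                    measurable_const).const_mul M).ennreal_ofReal measurableSet_Ioo)
                intro r hr
                rcases lt_or_ge r 1 with h1 | h1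
                · have hr0 : (0:ℝ) < r := hr
                  rw [hgdef]
                  simp only [Set.indicator_of_mem (Set.mem_Ico.mpr ⟨hr0.le, h1⟩),
                    Set.indicator_of_mem (Set.mem_Ioo.mpr ⟨hr0, h1⟩)]
                  have hf1 : (1 - r ^ 2 : ℝ) ^ s ≤ M * (1 - r) ^ s := by
                    have hfac : (1 - r ^ 2 : ℝ) = (1 - r) * (1 + r) := by ring
                    rw [hfac, Real.mul_rpow (by linarith) (by linarith)]
                    have h2 : (1 + r : ℝ) ^ s ≤ M := by
                      rcases le_or_gt 0 s with hs0 | hs0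
                      · exact le_trans (Real.rpow_le_rpow (by linarith) (by linarith) hs0)
                          (le_max_left _ _)
                      · exact le_trans (Real.rpow_le_one_of_one_le_of_nonpos (by linarith) hs0.le)
                          (le_max_right _ _)
                    calc (1 - r) ^ s * (1 + r) ^ s ≤ (1 - r) ^ s * M :=
                          mul_le_mul_of_nonneg_left h2 (Real.rpow_nonneg (by linarith) s)
                      _ = M * (1 - r) ^ s := by ring
                  calc ENNReal.ofReal (r ^ (d - 1)) * ENNReal.ofReal ((1 - r ^ 2) ^ s)
                      ≤ 1 * ENNReal.ofReal (M * (1 - r) ^ s) := by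
                        apply mul_le_mul'
                        · simp only [← ENNReal.ofReal_one]
                          exact ENNReal.ofReal_le_ofReal (pow_le_one₀ hr0.le h1.le)
                        · exact ENNReal.ofReal_le_ofReal hf1
                    _ = ENNReal.ofReal (M * (1 - r) ^ s) := one_mul _
                · have hico : r ∉ Ico (0:ℝ) 1 := fun h => absurd h.2 (not_lt.mpr h1)
                  have hioo : r ∉ Ioo (0:ℝ) 1 := fun h => absurd h.2 (not_lt.mpr h1)
                  rw [hgdef]
                  simp [Set.indicator_of_notMem hico, Set.indicator_of_notMem hioo]
            _ ≤ ∫⁻ r, Set.indicator (Ioo (0:ℝ) 1)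
                  (fun r => ENNReal.ofReal (M * (1 - r) ^ s)) r := setLIntegral_le_lintegral _ _
            _ = ∫⁻ r in Ioo (0:ℝ) 1, ENNReal.ofReal (M * (1 - r) ^ s) := by
                rw [lintegral_indicator measurableSet_Ioo]
            _ < ⊤ := by
                have : ∀ r : ℝ, ENNReal.ofReal (M * (1 - r) ^ s)
                    = ENNReal.ofReal M * ENNReal.ofReal ((1 - r) ^ s) := fun r =>
                  ENNReal.ofReal_mul hM0
                simp only [this]
                rw [lintegral_const_mul (ENNReal.ofReal M)
                  (f := fun r => ENNReal.ofReal ((1 - r) ^ s))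
                  (Measurable.ennreal_ofReal <| (measurable_const.sub measurable_id).pow_const s)]
                exact ENNReal.mul_lt_top ENNReal.ofReal_lt_top (oneD_lt_top hs)

lemma kappa_ne_zero (d : ℕ) (hd : 0 < d) (α : ℂ) (hα : 0 < α.re) :
    (∫ y in Metric.closedBall (0 : EuclideanSpace ℝ (Fin d)) 1,
      ((1 : ℂ) - (‖y‖ : ℂ) ^ 2) ^ (α - 1) * ((‖y‖ : ℝ) : ℂ) ^ (I : ℂ)) ≠ 0 := by
  haveI : Nonempty (Fin d) := ⟨⟨0, hd⟩⟩
  haveI : Nontrivial (EuclideanSpace ℝ (Fin d)) := inferInstance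
  set β : ℂ := ((d : ℂ) + I) / 2 with hβ
  have hβre : 0 < β.re := by
    rw [hβ, Complex.div_re]
    simp [Complex.normSq_apply]
    positivity
  set F : ℝ → ℂ := fun r => Set.indicator (Ioc (0:ℝ) 1)
      (fun r => ((1 : ℂ) - ((r : ℝ) : ℂ) ^ 2) ^ (α - 1) * ((r : ℝ) : ℂ) ^ (I : ℂ)) r with hF
  set G : ℝ → ℂ := fun u => Set.indicator (Ioc (0:ℝ) 1)
      (fun u => (2 : ℝ)⁻¹ • (((u : ℝ) : ℂ) ^ (β - 1) * ((1 : ℂ) - ((u : ℝ) : ℂ)) ^ (α - 1))) u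
      with hG
  have step1 : (∫ y in Metric.closedBall (0 : EuclideanSpace ℝ (Fin d)) 1,
      ((1 : ℂ) - (‖y‖ : ℂ) ^ 2) ^ (α - 1) * ((‖y‖ : ℝ) : ℂ) ^ (I : ℂ))
      = ∫ y : EuclideanSpace ℝ (Fin d), F ‖y‖ := by
    rw [← integral_indicator measurableSet_closedBall]
    congr 1; funext y
    by_cases hy : ‖y‖ ≤ 1
    · rw [Set.indicator_of_mem (mem_closedBall_zero_iff.mpr hy)]
      rcases eq_or_lt_of_le (norm_nonneg y) with h0 | h0
      · simp only [hF]
        rw [← h0]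
        rw [Set.indicator_of_notMem (by simp)]
        simp [Complex.zero_cpow Complex.I_ne_zero]
      · simp only [hF]
        rw [Set.indicator_of_mem (Set.mem_Ioc.mpr ⟨h0, hy⟩)]
    · rw [Set.indicator_of_notMem (by simpa [mem_closedBall_zero_iff] using hy)]
      simp only [hF]
      rw [Set.indicator_of_notMem (fun h => hy h.2)]
  have step2 : ∫ y : EuclideanSpace ℝ (Fin d), F ‖y‖
      = d • (volume (ball (0 : EuclideanSpace ℝ (Fin d)) 1)).toReal •
          ∫ r in Ioi (0:ℝ), r ^ (d - 1) • F r := by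
    have := integral_fun_norm_addHaar (volume : Measure (EuclideanSpace ℝ (Fin d))) F
    rwa [finrank_euclideanSpace_fin] at this
  have key : ∀ r ∈ Ioi (0:ℝ), (|(2:ℝ)| * r ^ ((2:ℝ) - 1)) • G (r ^ (2:ℝ)) = r ^ (d - 1) • F r := by
    intro r hr
    have hr0 : (0:ℝ) < r := hr
    have hr2 : r ^ ((2:ℝ)) = r ^ 2 := by
      rw [show (2:ℝ) = ((2:ℕ):ℝ) by norm_num, Real.rpow_natCast]
    by_cases h1 : r ≤ 1
    · have hmem : r ∈ Ioc (0:ℝ) 1 := ⟨hr0, h1⟩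
      have hmem2 : r ^ 2 ∈ Ioc (0:ℝ) 1 := ⟨pow_pos hr0 2, pow_le_one₀ hr0.le h1⟩
      rw [hr2]
      simp only [hG, hF]
      rw [Set.indicator_of_mem hmem, Set.indicator_of_mem hmem2]
      have hrne : ((r : ℝ) : ℂ) ≠ 0 := by exact_mod_cast hr0.ne'
      have hlogr : Complex.log ((r : ℝ) : ℂ) = ((Real.log r : ℝ) : ℂ) :=
        (Complex.ofReal_log hr0.le).symm
      have hlog2 : Complex.log (((r ^ 2 : ℝ)) : ℂ) = 2 * ((Real.log r : ℝ) : ℂ) := by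
        rw [← Complex.ofReal_log (by positivity), Real.log_pow]
        push_cast; ring
      have hB : ((r : ℝ) : ℂ) * (((r ^ 2 : ℝ)) : ℂ) ^ (β - 1)
          = ((r ^ (d - 1) : ℝ) : ℂ) * ((r : ℝ) : ℂ) ^ (I : ℂ) := by
        have h2ne : (((r ^ 2 : ℝ)) : ℂ) ≠ 0 := by
          have : (0:ℝ) < r ^ 2 := by positivity
          exact_mod_cast this.ne'
        rw [Complex.cpow_def_of_ne_zero h2ne, Complex.cpow_def_of_ne_zero hrne, hlog2, hlogr]
        have hexp : ((r : ℝ) : ℂ) = Complex.exp ((Real.log r : ℝ) : ℂ) := by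
          rw [← Complex.exp_log hrne, hlogr]
        have hpow : ((r ^ (d - 1) : ℝ) : ℂ) = Complex.exp (((d - 1 : ℕ) : ℂ) * ((Real.log r : ℝ) : ℂ)) := by
          rw [Complex.exp_nat_mul, ← hexp]
          push_cast; ring
        rw [hpow, hexp, ← Complex.exp_add, ← Complex.exp_add]
        congr 1
        have hcast : ((d - 1 : ℕ) : ℂ) = (d : ℂ) - 1 := by
          have : (1:ℕ) ≤ d := hd
          push_cast [Nat.cast_sub this]; ring
        rw [hcast, hβ]
        ring
      have hsq : (((r ^ 2 : ℝ)) : ℂ) = ((r : ℝ) : ℂ) ^ 2 := by push_cast; ring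
      -- now pure algebra
      have hsc : |(2:ℝ)| * r ^ ((2:ℝ) - 1) * 2⁻¹ = r := by
        rw [show ((2:ℝ) - 1) = 1 by norm_num, Real.rpow_one,
          abs_of_pos (by norm_num : (0:ℝ) < 2)]; ring
      rw [smul_smul, Complex.real_smul, Complex.real_smul, hsc, hsq]
      rw [hsq] at hB
      linear_combination ((1:ℂ) - ((r:ℝ):ℂ) ^ 2) ^ (α - 1) * hB
    · have hio : r ∉ Ioc (0:ℝ) 1 := fun h => h1 h.2
      have hio2 : r ^ 2 ∉ Ioc (0:ℝ) 1 := by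
        intro h
        exact absurd h.2 (not_le.mpr (by nlinarith))
      rw [hr2]
      simp only [hG, hF]
      rw [Set.indicator_of_notMem hio, Set.indicator_of_notMem hio2]
      simp
  have step3 : ∫ r in Ioi (0:ℝ), r ^ (d - 1) • F r = ∫ u in Ioi (0:ℝ), G u := by
    rw [← integral_comp_rpow_Ioi G (p := (2:ℝ)) two_ne_zero]
    exact (setIntegral_congr_fun measurableSet_Ioi key).symm
  have step4 : ∫ u in Ioi (0:ℝ), G u = (2 : ℝ)⁻¹ • Complex.betaIntegral β α := by
    rw [hG]
    rw [setIntegral_indicator measurableSet_Ioc]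
    rw [Set.inter_eq_right.mpr Set.Ioc_subset_Ioi_self]
    rw [integral_smul]
    congr 1
    rw [Complex.betaIntegral, intervalIntegral.integral_of_le zero_le_one]
  rw [step1, step2, step3, step4]
  have hbeta : Complex.betaIntegral β α ≠ 0 := by
    intro h
    have h2 := Complex.Gamma_mul_Gamma_eq_betaIntegral hβre hα
    rw [h, mul_zero] at h2
    exact absurd h2 (mul_ne_zero (Complex.Gamma_ne_zero_of_re_pos hβre)
      (Complex.Gamma_ne_zero_of_re_pos hα))
  have hvol : (volume (ball (0 : EuclideanSpace ℝ (Fin d)) 1)).toReal ≠ 0 :=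
    ne_of_gt (ENNReal.toReal_pos (measure_ball_pos volume 0 one_pos).ne' measure_ball_lt_top.ne)
  exact smul_ne_zero hd.ne' (smul_ne_zero hvol (smul_ne_zero (inv_ne_zero two_ne_zero) hbeta))

lemma sphAvg_scaling (d : ℕ) (α : ℂ) {t : ℝ} (ht : 0 < t) (ht1 : t ≤ 1) :
    sphAvg d α (ff d) t 0 = ((t : ℝ) : ℂ) ^ (I : ℂ) * sphAvg d α (ff d) 1 0 := by
  unfold sphAvg
  have key : (∫ y in Metric.closedBall (0 : EuclideanSpace ℝ (Fin d)) 1,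
        ((1 : ℂ) - (‖y‖ : ℂ) ^ 2) ^ (α - 1) * ff d (0 - t • y))
      = ((t : ℝ) : ℂ) ^ (I : ℂ) • ∫ y in Metric.closedBall (0 : EuclideanSpace ℝ (Fin d)) 1,
        ((1 : ℂ) - (‖y‖ : ℂ) ^ 2) ^ (α - 1) * ff d (0 - (1 : ℝ) • y) := by
    rw [← integral_smul]
    apply setIntegral_congr_fun measurableSet_closedBall
    intro y hy
    rw [mem_closedBall_zero_iff] at hy
    have hnt : ‖(0 : EuclideanSpace ℝ (Fin d)) - t • y‖ = t * ‖y‖ := by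
      rw [zero_sub, norm_neg, norm_smul, Real.norm_eq_abs, abs_of_pos ht]
    have hn1 : ‖(0 : EuclideanSpace ℝ (Fin d)) - (1 : ℝ) • y‖ = ‖y‖ := by
      rw [zero_sub, norm_neg, one_smul]
    have hle : t * ‖y‖ ≤ 1 := by nlinarith [norm_nonneg y]
    have h1 : ff d (0 - t • y) = ((t : ℝ) : ℂ) ^ (I : ℂ) * ff d (0 - (1 : ℝ) • y) := by
      rw [ff_eq (u := 0 - t • y) (by rw [hnt]; exact hle),
        ff_eq (u := 0 - (1:ℝ) • y) (by rw [hn1]; exact hy), hnt, hn1]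
      rw [Complex.ofReal_mul, mul_cpow_ofReal_nonneg ht.le (norm_nonneg y)]
    simp only [h1, smul_eq_mul]
    ring
  rw [key, smul_eq_mul]
  ring

lemma sphAvg_contAt (d : ℕ) (hd : 0 < d) (α : ℂ) (hα : 0 < α.re) (hα1 : α ≠ 1)
    {t : ℝ} (ht : 0 < t) (ht1 : t < 1) :
    ContinuousAt (fun x => sphAvg d α (ff d) t x) 0 := by
  haveI : Nonempty (Fin d) := ⟨⟨0, hd⟩⟩
  haveI : Nontrivial (EuclideanSpace ℝ (Fin d)) := inferInstance
  unfold sphAvg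
  apply continuousAt_const.mul
  apply continuousAt_of_dominated (bound := fun y => ‖((1 : ℂ) - (‖y‖ : ℂ) ^ 2) ^ (α - 1)‖)
  · apply Filter.Eventually.of_forall
    intro x
    exact (((measurable_const.sub ((Complex.measurable_ofReal.comp
      measurable_norm).pow_const 2)).pow measurable_const).mul
      ((ff_meas d).comp (measurable_const.sub (measurable_id.const_smul t)))).aestronglyMeasurable
  · apply Filter.Eventually.of_forall
    intro x
    apply ae_of_all
    intro y
    rw [norm_mul]
    calc ‖((1 : ℂ) - (‖y‖ : ℂ) ^ 2) ^ (α - 1)‖ * ‖ff d (x - t • y)‖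
        ≤ ‖((1 : ℂ) - (‖y‖ : ℂ) ^ 2) ^ (α - 1)‖ * 1 :=
          mul_le_mul_of_nonneg_left (ff_norm_le d _) (norm_nonneg _)
      _ = ‖((1 : ℂ) - (‖y‖ : ℂ) ^ 2) ^ (α - 1)‖ := mul_one _
  · exact (wInt d hd α hα hα1).norm
  · have h0 : ∀ᵐ y : EuclideanSpace ℝ (Fin d) ∂volume, y ≠ 0 := by
      rw [MeasureTheory.ae_iff]
      have : {y : EuclideanSpace ℝ (Fin d) | ¬ y ≠ 0} = {0} := by ext y; simp
      rw [this]
      exact measure_singleton 0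
    filter_upwards [ae_restrict_of_ae h0, ae_restrict_mem measurableSet_closedBall] with y hy hymem
    rw [mem_closedBall_zero_iff] at hymem
    apply continuousAt_const.mul
    have hzne : (0 : EuclideanSpace ℝ (Fin d)) - t • y ≠ 0 := by
      rw [zero_sub, neg_ne_zero]
      exact smul_ne_zero ht.ne' hy
    have hznorm : ‖(0 : EuclideanSpace ℝ (Fin d)) - t • y‖ < 1 := by
      rw [zero_sub, norm_neg, norm_smul, Real.norm_eq_abs, abs_of_pos ht]
      calc t * ‖y‖ ≤ t * 1 := mul_le_mul_of_nonneg_left hymem ht.le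
        _ < 1 := by rwa [mul_one]
    have hff : ContinuousAt (ff d) ((0 : EuclideanSpace ℝ (Fin d)) - t • y) := by
      have hcpow : ContinuousAt (fun u : EuclideanSpace ℝ (Fin d) => ((‖u‖ : ℝ) : ℂ) ^ (I : ℂ))
          ((0 : EuclideanSpace ℝ (Fin d)) - t • y) := by
        have h1 : ContinuousAt (fun u : EuclideanSpace ℝ (Fin d) => ((‖u‖ : ℝ) : ℂ))
            ((0 : EuclideanSpace ℝ (Fin d)) - t • y) :=
          (Complex.continuous_ofReal.comp continuous_norm).continuousAt
        have h2 : ContinuousAt (fun w : ℂ => w ^ (I : ℂ))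
            (((‖(0 : EuclideanSpace ℝ (Fin d)) - t • y‖ : ℝ)) : ℂ) :=
          continuousAt_cpow_const (Complex.ofReal_mem_slitPlane.2 (norm_pos_iff.2 hzne))
        exact ContinuousAt.comp (g := fun w : ℂ => w ^ (I : ℂ))
          (f := fun u : EuclideanSpace ℝ (Fin d) => ((‖u‖ : ℝ) : ℂ)) h2 h1
      apply hcpow.congr
      have hU : IsOpen (Metric.ball (0 : EuclideanSpace ℝ (Fin d)) 1 ∩ {(0 : EuclideanSpace ℝ (Fin d))}ᶜ) :=
        Metric.isOpen_ball.inter isClosed_singleton.isOpen_compl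
      have hzU : (0 : EuclideanSpace ℝ (Fin d)) - t • y ∈
          Metric.ball (0 : EuclideanSpace ℝ (Fin d)) 1 ∩ {(0 : EuclideanSpace ℝ (Fin d))}ᶜ :=
        ⟨mem_ball_zero_iff.mpr hznorm, hzne⟩
      apply Filter.eventually_of_mem (hU.mem_nhds hzU)
      intro u hu
      exact (ff_eq (le_of_lt (mem_ball_zero_iff.mp hu.1))).symm
    have hsub : ContinuousAt (fun x : EuclideanSpace ℝ (Fin d) => x - t • y) 0 :=
      (continuous_id.sub continuous_const).continuousAt
    exact ContinuousAt.comp (g := ff d)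
      (f := fun x : EuclideanSpace ℝ (Fin d) => x - t • y) (x := 0) hff hsub

lemma cpow_exp_I (sr : ℝ) :
    ((Real.exp sr : ℝ) : ℂ) ^ (I : ℂ) = Complex.exp ((sr : ℂ) * I) := by
  have hne : ((Real.exp sr : ℝ) : ℂ) ≠ 0 := by exact_mod_cast (Real.exp_pos sr).ne'
  rw [Complex.cpow_def_of_ne_zero hne]
  congr 1
  have : Complex.log ((Real.exp sr : ℝ) : ℂ) = (sr : ℂ) := by
    rw [Complex.ofReal_exp, Complex.log_exp]
    · rw [Complex.ofReal_im]; linarith [Real.pi_pos]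
    · rw [Complex.ofReal_im]; exact Real.pi_pos.le
  rw [this]

lemma diff_norm_eq (a : ℝ) (κ : ℂ) :
    ‖Complex.exp (((a + π : ℝ) : ℂ) * I) * κ - Complex.exp ((a : ℂ) * I) * κ‖ = 2 * ‖κ‖ := by
  have h1 : ((a + π : ℝ) : ℂ) * I = (a : ℂ) * I + (π : ℂ) * I := by push_cast; ring
  rw [h1, show Complex.exp ((a : ℂ) * I + (π : ℂ) * I) * κ - Complex.exp ((a : ℂ) * I) * κ
      = (-2 : ℂ) * (Complex.exp ((a : ℂ) * I) * κ) from by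
        rw [Complex.exp_add, Complex.exp_pi_mul_I]; ring]
  rw [norm_mul, norm_mul]
  have h2 : ‖Complex.exp ((a : ℂ) * I)‖ = 1 := by
    rw [Complex.norm_exp]
    simp
  rw [h2]
  simp


theorem variation_unbounded_Linfty (d : ℕ) (hd : 2 ≤ d) (q : ℝ) (hq1 : 2 < q)
    (α : ℂ) (hα : 0 < α.re) (hα1 : α ≠ 1) :
    ∀ C > 0, ∃ f : EuclideanSpace ℝ (Fin d) → ℂ,
      Measurable f ∧ HasCompactSupport f ∧ (∃ M : ℝ, ∀ x, ‖f x‖ ≤ M) ∧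
      0 < eLpNorm f ∞ volume ∧
      ENNReal.ofReal C * eLpNorm f ∞ volume <
        essSup (fun x => vqNorm q (fun t => sphAvg d α f t x)) volume := by
  intro C hC
  have hd0 : 0 < d := lt_of_lt_of_le two_pos hd
  haveI : Nonempty (Fin d) := ⟨⟨0, hd0⟩⟩
  haveI : Nontrivial (EuclideanSpace ℝ (Fin d)) := inferInstance
  set f := ff d with hfdef
  set κ : ℂ := sphAvg d α f 1 0 with hκdef
  have hκ : κ ≠ 0 := by
    rw [hκdef, hfdef]
    unfold sphAvg
    apply mul_ne_zero (inv_ne_zero (Complex.Gamma_ne_zero_of_re_pos hα))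
    have heq : (∫ y in Metric.closedBall (0 : EuclideanSpace ℝ (Fin d)) 1,
          ((1 : ℂ) - (‖y‖ : ℂ) ^ 2) ^ (α - 1) * ff d (0 - (1:ℝ) • y))
        = ∫ y in Metric.closedBall (0 : EuclideanSpace ℝ (Fin d)) 1,
          ((1 : ℂ) - (‖y‖ : ℂ) ^ 2) ^ (α - 1) * ((‖y‖ : ℝ) : ℂ) ^ (I : ℂ) := by
      apply setIntegral_congr_fun measurableSet_closedBall
      intro y hy
      rw [mem_closedBall_zero_iff] at hy
      dsimp only
      rw [one_smul, zero_sub, ff_eq (u := -y) (by rw [norm_neg]; exact hy), norm_neg]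
    rw [heq]
    exact kappa_ne_zero d hd0 α hα
  set k : ℝ := ‖κ‖ with hkdef
  have hk : 0 < k := norm_pos_iff.2 hκ
  have hq0 : (0:ℝ) < q := lt_trans two_pos hq1
  set L : ℕ := ⌈(C / k) ^ q⌉₊ + 1 with hL
  have hLb : C < (L:ℝ) ^ (1/q) * k := by
    have h1 : (C/k)^q < (L:ℝ) := by
      calc (C/k)^q ≤ (⌈(C/k)^q⌉₊ : ℝ) := Nat.le_ceil _
        _ < L := by rw [hL]; push_cast; linarith
    have h2 : ((C/k)^q)^(1/q) < (L:ℝ)^(1/q) :=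
      Real.rpow_lt_rpow (Real.rpow_nonneg (div_nonneg hC.le hk.le) q) h1 (by positivity)
    have h3 : ((C/k)^q)^(1/q) = C/k := by
      rw [← Real.rpow_mul (div_nonneg hC.le hk.le), mul_one_div_cancel hq0.ne', Real.rpow_one]
    rw [h3] at h2
    calc C = (C/k) * k := by field_simp
      _ < (L:ℝ)^(1/q) * k := by
        apply mul_lt_mul_of_pos_right h2 hk
  set tt : Fin (L+1) → ℝ := fun j => Real.exp (π * (j:ℝ) - π * L - 1) with htt
  have htt_pos : ∀ j, 0 < tt j := fun j => Real.exp_pos _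
  have htt_mono : StrictMono tt := by
    intro i j hij
    apply Real.exp_lt_exp.2
    have hij' : (i:ℝ) < (j:ℝ) := by exact_mod_cast hij
    nlinarith [Real.pi_pos]
  have hexp1 : Real.exp (-1:ℝ) < 1 := by
    have := Real.exp_lt_exp.2 (show (-1:ℝ) < 0 by norm_num)
    rwa [Real.exp_zero] at this
  have htt_lt1 : ∀ j : Fin (L+1), tt j < 1 := by
    intro j
    refine lt_of_le_of_lt ?_ hexp1
    apply Real.exp_le_exp.2
    have hval : (j:ℝ) ≤ L := by exact_mod_cast Nat.lt_succ_iff.mp j.isLt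
    nlinarith [Real.pi_pos]
  have hval : ∀ j : Fin (L+1), sphAvg d α f (tt j) 0
      = Complex.exp (((π * (j:ℝ) - π * L - 1 : ℝ) : ℂ) * I) * κ := by
    intro j
    rw [sphAvg_scaling d α (htt_pos j) (htt_lt1 j).le]
    rw [show tt j = Real.exp (π * (j:ℝ) - π * L - 1) from rfl, cpow_exp_I]
  have hdiff0 : ∀ j : Fin L,
      ‖sphAvg d α f (tt j.succ) 0 - sphAvg d α f (tt j.castSucc) 0‖ = 2 * k := by
    intro j
    rw [hval j.succ, hval j.castSucc]
    have hs : (π * ((j.succ : Fin (L+1)):ℝ) - π * L - 1)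
        = (π * ((j.castSucc : Fin (L+1)):ℝ) - π * L - 1) + π := by
      have h1 : ((j.succ : Fin (L+1)) : ℝ) = (j:ℝ) + 1 := by
        rw [Fin.val_succ]; push_cast; ring
      have h2 : ((j.castSucc : Fin (L+1)) : ℝ) = (j:ℝ) := by rw [Fin.coe_castSucc]
      rw [h1, h2]; ring
    rw [hs]
    exact diff_norm_eq _ κ
  have hev : ∀ᶠ x in nhds (0 : EuclideanSpace ℝ (Fin d)), ∀ j : Fin (L+1),
      ‖sphAvg d α f (tt j) x - sphAvg d α f (tt j) 0‖ < k/2 := by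
    rw [Filter.eventually_all]
    intro j
    have hc := sphAvg_contAt d hd0 α hα hα1 (htt_pos j) (htt_lt1 j)
    have h2 := Metric.tendsto_nhds.mp hc (k/2) (half_pos hk)
    filter_upwards [h2] with x hx
    rwa [dist_eq_norm] at hx
  obtain ⟨δ, hδpos, hδ⟩ := Metric.eventually_nhds_iff.mp hev
  set b : ℝ := (L:ℝ)^(1/q) * k with hb
  have hlow : ∀ x : EuclideanSpace ℝ (Fin d), dist x 0 < δ →
      ENNReal.ofReal b ≤ vqNorm q (fun t => sphAvg d α f t x) := by
    intro x hx
    have hterm : ∀ j : Fin L,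
        k ≤ ‖sphAvg d α f (tt j.succ) x - sphAvg d α f (tt j.castSucc) x‖ := by
      intro j
      have h1 := hδ hx j.succ
      have h2 := hδ hx j.castSucc
      have h0 := hdiff0 j
      have htri : ‖sphAvg d α f (tt j.succ) 0 - sphAvg d α f (tt j.castSucc) 0‖
          ≤ ‖sphAvg d α f (tt j.succ) x - sphAvg d α f (tt j.castSucc) x‖
            + ‖sphAvg d α f (tt j.succ) x - sphAvg d α f (tt j.succ) 0‖
            + ‖sphAvg d α f (tt j.castSucc) x - sphAvg d α f (tt j.castSucc) 0‖ := by
        have heq : sphAvg d α f (tt j.succ) 0 - sphAvg d α f (tt j.castSucc) 0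
            = (sphAvg d α f (tt j.succ) x - sphAvg d α f (tt j.castSucc) x)
              - (sphAvg d α f (tt j.succ) x - sphAvg d α f (tt j.succ) 0)
              + (sphAvg d α f (tt j.castSucc) x - sphAvg d α f (tt j.castSucc) 0) := by ring
        rw [heq]
        calc ‖_ - _ + _‖ ≤ ‖_ - _‖ + ‖_‖ := norm_add_le _ _
          _ ≤ ‖_‖ + ‖_‖ + ‖_‖ := add_le_add_left (norm_sub_le _ _) _
      rw [h0] at htri
      linarith
    have hsum : (L:ℝ) * k^q
        ≤ ∑ i : Fin L, ‖sphAvg d α f (tt i.succ) x - sphAvg d α f (tt i.castSucc) x‖ ^ q := by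
      have hconst : (L:ℝ) * k^q = ∑ _i : Fin L, k^q := by
        rw [Finset.sum_const, Finset.card_univ, Fintype.card_fin, nsmul_eq_mul]
      rw [hconst]
      apply Finset.sum_le_sum
      intro i _
      exact Real.rpow_le_rpow hk.le (hterm i) hq0.le
    have hble : b ≤ (∑ i : Fin L,
        ‖sphAvg d α f (tt i.succ) x - sphAvg d α f (tt i.castSucc) x‖ ^ q) ^ (1/q) := by
      have h1 : ((L:ℝ) * k^q)^(1/q) ≤ (∑ i : Fin L,
          ‖sphAvg d α f (tt i.succ) x - sphAvg d α f (tt i.castSucc) x‖ ^ q) ^ (1/q) := by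
        apply Real.rpow_le_rpow (by positivity) hsum (by positivity)
      have h2 : ((L:ℝ) * k^q)^(1/q) = b := by
        rw [Real.mul_rpow (Nat.cast_nonneg L) (Real.rpow_nonneg hk.le q)]
        rw [← Real.rpow_mul hk.le, mul_one_div_cancel hq0.ne', Real.rpow_one]
      rw [← h2]
      exact h1
    calc ENNReal.ofReal b ≤ ENNReal.ofReal ((∑ i : Fin L,
        ‖sphAvg d α f (tt i.succ) x - sphAvg d α f (tt i.castSucc) x‖ ^ q) ^ (1/q)) :=
          ENNReal.ofReal_le_ofReal hble
      _ ≤ vqNorm q (fun t => sphAvg d α f t x) := by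
          rw [vqNorm]
          exact le_iSup_of_le L (le_iSup_of_le tt
            (le_iSup_of_le htt_mono (le_iSup_of_le htt_pos le_rfl)))
  have hess : ENNReal.ofReal b
      ≤ essSup (fun x => vqNorm q (fun t => sphAvg d α f t x)) volume := by
    by_contra hcon
    push_neg at hcon
    have hae := ae_lt_of_essSup_lt hcon
    rw [MeasureTheory.ae_iff] at hae
    have hnull : volume (Metric.ball (0 : EuclideanSpace ℝ (Fin d)) δ) = 0 := by
      apply measure_mono_null _ hae
      intro x hxball
      simp only [Set.mem_setOf_eq, not_lt]
      exact hlow x (by rwa [Metric.mem_ball] at hxball)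
    exact absurd hnull (measure_ball_pos volume 0 hδpos).ne'
  have hle1 : eLpNorm f ∞ volume ≤ 1 := by
    have h := eLpNorm_le_of_ae_bound (μ := volume) (p := ∞) (f := f)
      (C := 1) (ae_of_all _ (ff_norm_le d))
    simpa using h
  have hpos : 0 < eLpNorm f ∞ volume := by
    rw [pos_iff_ne_zero]
    intro h0
    have hf0 := (eLpNorm_eq_zero_iff ((ff_meas d).aestronglyMeasurable) (by simp)).mp h0
    rw [Filter.EventuallyEq, MeasureTheory.ae_iff] at hf0
    have hsub : Metric.ball (0 : EuclideanSpace ℝ (Fin d)) 1 \ {0}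
        ⊆ {x | ¬ f x = (0 : EuclideanSpace ℝ (Fin d) → ℂ) x} := by
      intro u hu
      simp only [Set.mem_setOf_eq, Pi.zero_apply]
      rw [hfdef, ff_eq (le_of_lt (mem_ball_zero_iff.mp hu.1))]
      rw [Complex.cpow_eq_zero_iff]
      push_neg
      intro hc
      exact absurd (by exact_mod_cast hc) (norm_ne_zero_iff.2 hu.2)
    have hnull : volume (Metric.ball (0 : EuclideanSpace ℝ (Fin d)) 1 \ {0}) = 0 :=
      measure_mono_null hsub hf0
    rw [measure_diff_null (measure_singleton _)] at hnull
    exact absurd hnull (measure_ball_pos volume 0 one_pos).ne'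
  refine ⟨f, ff_meas d, ff_compact_support d, ⟨1, ff_norm_le d⟩, hpos, ?_⟩
  calc ENNReal.ofReal C * eLpNorm f ∞ volume ≤ ENNReal.ofReal C * 1 := mul_le_mul_right hle1 _
    _ = ENNReal.ofReal C := mul_one _
    _ < ENNReal.ofReal b := (ENNReal.ofReal_lt_ofReal_iff (by positivity)).mpr hLb
    _ ≤ _ := hess
end
end

section
/- Let q ∈ [1, ∞). There exists a constant C > 0 depending only on q such that for every continuously differentiable function F : (0, ∞) → ℂ, the q-variation norm of {F(t)}_{t>0} satisfies ‖{F(t)}_{t>0}‖_{v_q} ≤ C (∫_0^∞ |F(t)|^q dt)^{(1−1/q)/q} (∫_0^∞ |F′(t)|^q dt)^{1/q²}, i.e. ‖{F(t)}_{t>0}‖_{v_q} ≤ C ‖F‖_{L^q(0,∞)}^{1/q′} ‖F′‖_{L^q(0,∞)}^{1/q} where 1/q + 1/q′ = 1. -/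
noncomputable section
open MeasureTheory Complex
open scoped ENNReal NNReal

section VqHelpers

variable {F : ℝ → ℂ} {q : ℝ}

lemma my_hasDerivAt (hF : ContDiffOn ℝ 1 F (Set.Ioi 0)) {x : ℝ} (hx : 0 < x) :
    HasDerivAt F (deriv F x) x := by
  have h1 : DifferentiableAt ℝ F x :=
    (hF.differentiableOn one_ne_zero).differentiableAt (isOpen_Ioi.mem_nhds hx)
  exact h1.hasDerivAt

lemma my_derivCont (hF : ContDiffOn ℝ 1 F (Set.Ioi 0)) :
    ContinuousOn (deriv F) (Set.Ioi 0) :=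
  hF.continuousOn_deriv_of_isOpen isOpen_Ioi le_rfl

lemma ftc_bound (hF : ContDiffOn ℝ 1 F (Set.Ioi 0)) {a b : ℝ} (ha : 0 < a) (hab : a ≤ b) :
    ‖F b - F a‖ ≤ ∫ t in a..b, ‖deriv F t‖ := by
  have hsub : Set.uIcc a b ⊆ Set.Ioi 0 := by
    rw [Set.uIcc_of_le hab]
    intro x hx; exact lt_of_lt_of_le ha hx.1
  have hint : IntervalIntegrable (deriv F) volume a b :=
    ((my_derivCont hF).mono hsub).intervalIntegrable
  have heq : ∫ t in a..b, deriv F t = F b - F a :=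
    intervalIntegral.integral_deriv_eq_sub
      (fun x hx => (my_hasDerivAt hF (hsub hx)).differentiableAt) hint
  rw [← heq]
  exact intervalIntegral.norm_integral_le_integral_norm hab


lemma sub_integral_le {g : ℝ → ℝ} {a b x y : ℝ} (hax : a ≤ x) (hxy : x ≤ y) (hyb : y ≤ b)
    (hg : ContinuousOn g (Set.Icc a b)) (hg0 : ∀ t ∈ Set.Icc a b, 0 ≤ g t) :
    ∫ t in x..y, g t ≤ ∫ t in a..b, g t := by
  have hab : a ≤ b := hax.trans (hxy.trans hyb)
  rw [intervalIntegral.integral_of_le hxy, intervalIntegral.integral_of_le hab]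
  have hgi : IntegrableOn g (Set.Ioc a b) volume :=
    (hg.integrableOn_Icc).mono_set Set.Ioc_subset_Icc_self
  refine setIntegral_mono_set hgi ?_ ?_
  · filter_upwards [ae_restrict_mem measurableSet_Ioc] with t ht
    exact hg0 t (Set.Ioc_subset_Icc_self ht)
  · exact HasSubset.Subset.eventuallyLE (Set.Ioc_subset_Ioc hax hyb)

lemma exists_min_pt {g : ℝ → ℝ} {a b : ℝ} (hab : a < b) (hg : ContinuousOn g (Set.Icc a b)) :
    ∃ s ∈ Set.Icc a b, g s * (b - a) ≤ ∫ t in a..b, g t := by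
  obtain ⟨s, hs, hmin⟩ := isCompact_Icc.exists_isMinOn (Set.nonempty_Icc.2 hab.le) hg
  refine ⟨s, hs, ?_⟩
  have h1 : ∫ _t in a..b, g s = (b - a) * g s := by
    simp [intervalIntegral.integral_const, smul_eq_mul]
  have h2 : ∫ _t in a..b, g s ≤ ∫ t in a..b, g t := by
    refine intervalIntegral.integral_mono_on hab.le intervalIntegrable_const
      (hg.intervalIntegrable_of_Icc hab.le) (fun x hx => hmin hx)
  linarith [h1 ▸ h2]

lemma holder_interval {q : ℝ} (hq : 1 ≤ q) {g : ℝ → ℝ} {a b : ℝ} (hab : a ≤ b)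
    (hg : ContinuousOn g (Set.Icc a b)) (hg0 : ∀ t ∈ Set.Icc a b, 0 ≤ g t) :
    ∫ t in a..b, g t ≤ (b - a) ^ (1 - 1/q) * (∫ t in a..b, g t ^ q) ^ (1/q) := by
  rcases eq_or_lt_of_le hq with hq1 | hq1
  · subst hq1
    simp [Real.rpow_one]
  -- q > 1
  have hq0 : (0:ℝ) < q := lt_trans zero_lt_one hq1
  have hgq : ContinuousOn (fun t => g t ^ q) (Set.Icc a b) :=
    hg.rpow_const (fun x _hx => Or.inr hq0.le)
  have hgi : IntegrableOn g (Set.Ioc a b) volume :=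
    (hg.integrableOn_Icc).mono_set Set.Ioc_subset_Icc_self
  have hgqi : IntegrableOn (fun t => g t ^ q) (Set.Ioc a b) volume :=
    (hgq.integrableOn_Icc).mono_set Set.Ioc_subset_Icc_self
  have hnn : 0 ≤ᵐ[volume.restrict (Set.Ioc a b)] g := by
    filter_upwards [ae_restrict_mem measurableSet_Ioc] with t ht
    exact hg0 t (Set.Ioc_subset_Icc_self ht)
  have hnnq : 0 ≤ᵐ[volume.restrict (Set.Ioc a b)] fun t => g t ^ q := by
    filter_upwards [ae_restrict_mem measurableSet_Ioc] with t ht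
    exact Real.rpow_nonneg (hg0 t (Set.Ioc_subset_Icc_self ht)) q
  have hpq : (q / (q - 1)).HolderConjugate q := by
    rw [Real.holderConjugate_iff]; constructor
    · rw [lt_div_iff₀ (by linarith)]; linarith
    · field_simp; ring
  have hmeas : AEMeasurable (fun t => ENNReal.ofReal (g t)) (volume.restrict (Set.Ioc a b)) :=
    ENNReal.measurable_ofReal.comp_aemeasurable hgi.aemeasurable
  have hA := ENNReal.lintegral_mul_le_Lp_mul_Lq (volume.restrict (Set.Ioc a b)) hpq (aemeasurable_const (b := (1:ℝ≥0∞))) hmeas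
  simp only [ENNReal.one_rpow, Pi.mul_apply, one_mul, lintegral_const] at hA
  have hμ : (volume.restrict (Set.Ioc a b)) Set.univ = ENNReal.ofReal (b - a) := by
    simp [Real.volume_Ioc]
  rw [hμ] at hA
  have hinv : 1 / (q / (q - 1)) = 1 - 1/q := by
    field_simp
  rw [hinv] at hA
  have hl1 : ∫⁻ t, ENNReal.ofReal (g t) ∂(volume.restrict (Set.Ioc a b)) = ENNReal.ofReal (∫ t in Set.Ioc a b, g t) :=
    (MeasureTheory.ofReal_integral_eq_lintegral_ofReal hgi hnn).symm
  have hl2 : ∫⁻ t, ENNReal.ofReal (g t) ^ q ∂(volume.restrict (Set.Ioc a b)) = ENNReal.ofReal (∫ t in Set.Ioc a b, g t ^ q) := by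
    rw [MeasureTheory.ofReal_integral_eq_lintegral_ofReal hgqi hnnq]
    refine lintegral_congr_ae ?_
    filter_upwards [ae_restrict_mem measurableSet_Ioc] with t ht
    exact ENNReal.ofReal_rpow_of_nonneg (hg0 t (Set.Ioc_subset_Icc_self ht)) hq0.le
  rw [hl1, hl2] at hA
  rw [intervalIntegral.integral_of_le hab, intervalIntegral.integral_of_le hab]
  have hrhs0 : 0 ≤ (b - a) ^ (1 - 1/q) * (∫ t in Set.Ioc a b, g t ^ q) ^ (1/q) := by
    have h1 : (0:ℝ) ≤ ∫ t in Set.Ioc a b, g t ^ q := integral_nonneg_of_ae hnnq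
    exact mul_nonneg (Real.rpow_nonneg (by linarith) _) (Real.rpow_nonneg h1 _)
  rw [← ENNReal.ofReal_le_ofReal_iff hrhs0]
  refine le_trans hA (le_of_eq ?_)
  have he1 : (0:ℝ) ≤ 1 - 1/q := by
    have : 1/q ≤ 1 := by rw [div_le_one hq0]; exact hq
    linarith
  rw [ENNReal.ofReal_mul (Real.rpow_nonneg (by linarith) _),
    ENNReal.ofReal_rpow_of_nonneg (by linarith) he1,
    ENNReal.ofReal_rpow_of_nonneg (integral_nonneg_of_ae hnnq) (one_div_pos.mpr hq0).le]

lemma sum_interval_le {g : ℝ → ℝ} (hg : ContinuousOn g (Set.Ioi 0))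
    (hg0 : ∀ t ∈ Set.Ioi 0, 0 ≤ g t) (hgint : IntegrableOn g (Set.Ioi 0) volume)
    {L : ℕ} {t : Fin (L+1) → ℝ} (hmono : StrictMono t) (hpos : ∀ i, 0 < t i) :
    ∑ i : Fin L, ∫ s in (t i.castSucc)..(t i.succ), g s ≤ ∫ s in Set.Ioi 0, g s := by
  set a : ℕ → ℝ := fun k => t ⟨min k L, by omega⟩ with ha_def
  have hint : ∀ k, k < L → IntervalIntegrable g volume (a k) (a (k+1)) := by
    intro k hk
    have h1 : a k ≤ a (k+1) := hmono.monotone (by simp only [Fin.mk_le_mk]; omega)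
    apply ContinuousOn.intervalIntegrable
    apply hg.mono
    rw [Set.uIcc_of_le h1]
    intro x hx
    exact lt_of_lt_of_le (hpos _) hx.1
  have htel := intervalIntegral.sum_integral_adjacent_intervals (μ := volume) (f := g) hint
  have hsum : ∑ i : Fin L, ∫ s in (t i.castSucc)..(t i.succ), g s
      = ∑ k ∈ Finset.range L, ∫ s in (a k)..(a (k+1)), g s := by
    rw [← Fin.sum_univ_eq_sum_range (fun k => ∫ s in (a k)..(a (k+1)), g s) L]
    refine Finset.sum_congr rfl fun i _ => ?_
    have hi := i.isLt
    have e1 : a ↑i = t i.castSucc := by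
      simp only [ha_def]
      congr 1
      apply Fin.ext
      simp only [Fin.val_mk, Fin.coe_castSucc]
      omega
    have e2 : a (↑i+1) = t i.succ := by
      simp only [ha_def]
      congr 1
      apply Fin.ext
      simp only [Fin.val_mk, Fin.val_succ]
      omega
    rw [e1, e2]
  rw [hsum, htel]
  have h0L : a 0 ≤ a L := hmono.monotone (by simp only [Fin.mk_le_mk]; omega)
  rw [intervalIntegral.integral_of_le h0L]
  refine setIntegral_mono_set hgint ?_ ?_
  · filter_upwards [ae_restrict_mem measurableSet_Ioi] with x hx using hg0 x hx
  · refine HasSubset.Subset.eventuallyLE ?_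
    intro x hx
    exact lt_of_lt_of_le (hpos _) hx.1.le

lemma sum_holder {q : ℝ} (hq : 1 ≤ q) {L : ℕ} (u v : Fin L → ℝ)
    (hu : ∀ i, 0 ≤ u i) (hv : ∀ i, 0 ≤ v i) :
    ∑ i, (u i) ^ (1 - 1/q) * (v i) ^ (1/q)
      ≤ (∑ i, u i) ^ (1 - 1/q) * (∑ i, v i) ^ (1/q) := by
  rcases eq_or_lt_of_le hq with hq1 | hq1
  · rw [← hq1]
    norm_num
  have hq0 : (0:ℝ) < q := by linarith
  have hne : q - 1 ≠ 0 := sub_ne_zero.mpr hq1.ne'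
  have hpq : (q / (q - 1)).HolderConjugate q := by
    rw [Real.holderConjugate_iff]; constructor
    · rw [lt_div_iff₀ (by linarith)]; linarith
    · field_simp; ring
  have h := Real.inner_le_Lp_mul_Lq_of_nonneg (s := Finset.univ)
    (f := fun i => (u i) ^ (1 - 1/q)) (g := fun i => (v i) ^ (1/q)) hpq
    (fun i _ => Real.rpow_nonneg (hu i) _) (fun i _ => Real.rpow_nonneg (hv i) _)
  have e1 : ∀ i, ((u i) ^ (1 - 1/q)) ^ (q/(q-1)) = u i := by
    intro i
    rw [← Real.rpow_mul (hu i), show (1 - 1/q) * (q/(q-1)) = 1 by field_simp, Real.rpow_one]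
  have e2 : ∀ i, ((v i) ^ ((1:ℝ)/q)) ^ q = v i := by
    intro i
    rw [← Real.rpow_mul (hv i), one_div, inv_mul_cancel₀ hq0.ne', Real.rpow_one]
  simp only [e1, e2] at h
  rwa [show 1/(q/(q-1)) = 1 - 1/q by rw [one_div_div]; field_simp] at h

lemma key_interval (hq : 1 ≤ q) (hF : ContDiffOn ℝ 1 F (Set.Ioi 0)) {a b : ℝ}
    (ha : 0 < a) (hab : a < b) :
    ‖F b - F a‖ ≤ 4 * ((∫ t in a..b, ‖F t‖ ^ q) ^ (1/q)) ^ (1 - 1/q) *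
      ((∫ t in a..b, ‖deriv F t‖ ^ q) ^ (1/q)) ^ (1/q) := by
  have hq0 : (0:ℝ) < q := lt_of_lt_of_le zero_lt_one hq
  have h1q : (0:ℝ) < 1/q := one_div_pos.mpr hq0
  have he : (0:ℝ) ≤ 1 - 1/q := by
    have : 1/q ≤ 1 := by rw [div_le_one hq0]; exact hq
    linarith
  have hFc : ContinuousOn F (Set.Ioi 0) := hF.continuousOn
  have hFnc : ContinuousOn (fun t => ‖F t‖) (Set.Ioi 0) := hFc.norm
  have hFqc : ContinuousOn (fun t => ‖F t‖ ^ q) (Set.Ioi 0) :=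
    hFnc.rpow_const (fun x _ => Or.inr hq0.le)
  have hFpc : ContinuousOn (fun t => ‖deriv F t‖) (Set.Ioi 0) := (my_derivCont hF).norm
  have hFpqc : ContinuousOn (fun t => ‖deriv F t‖ ^ q) (Set.Ioi 0) :=
    hFpc.rpow_const (fun x _ => Or.inr hq0.le)
  have hIcc : Set.Icc a b ⊆ Set.Ioi 0 := fun x hx => lt_of_lt_of_le ha hx.1
  set u := ∫ t in a..b, ‖F t‖ ^ q with hu_def
  set v := ∫ t in a..b, ‖deriv F t‖ ^ q with hv_def
  have hu0 : 0 ≤ u := intervalIntegral.integral_nonneg hab.le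
    (fun t _ => Real.rpow_nonneg (norm_nonneg _) q)
  have hv0 : 0 ≤ v := intervalIntegral.integral_nonneg hab.le
    (fun t _ => Real.rpow_nonneg (norm_nonneg _) q)
  set A0 := u ^ (1/q) with hA0_def
  set B0 := v ^ (1/q) with hB0_def
  have hA00 : 0 ≤ A0 := Real.rpow_nonneg hu0 _
  have hB00 : 0 ≤ B0 := Real.rpow_nonneg hv0 _
  -- claim 1
  have claim1 : ∀ x y : ℝ, a ≤ x → x ≤ y → y ≤ b →
      ‖F y - F x‖ ≤ (y - x) ^ (1 - 1/q) * B0 := by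
    intro x y hax hxy hyb
    have hx0 : 0 < x := lt_of_lt_of_le ha hax
    have h1 : ‖F y - F x‖ ≤ ∫ t in x..y, ‖deriv F t‖ := ftc_bound hF hx0 hxy
    have h2 : ∫ t in x..y, ‖deriv F t‖ ≤
        (y - x) ^ (1 - 1/q) * (∫ t in x..y, ‖deriv F t‖ ^ q) ^ (1/q) := by
      refine holder_interval hq hxy (hFpc.mono ?_) (fun t _ => norm_nonneg _)
      exact fun z hz => hIcc ⟨hax.trans hz.1, hz.2.trans hyb⟩
    have h3 : ∫ t in x..y, ‖deriv F t‖ ^ q ≤ v :=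
      sub_integral_le hax hxy hyb (hFpqc.mono hIcc)
        (fun t _ => Real.rpow_nonneg (norm_nonneg _) q)
    refine h1.trans (h2.trans ?_)
    have := Real.rpow_le_rpow (intervalIntegral.integral_nonneg hxy
      (fun t _ => Real.rpow_nonneg (norm_nonneg _) q)) h3 h1q.le
    exact mul_le_mul_of_nonneg_left this (Real.rpow_nonneg (by linarith) _)
  -- claim 2
  have claim2 : ∀ x y : ℝ, a ≤ x → x < y → y ≤ b →
      ∃ s ∈ Set.Icc x y, ‖F s‖ ≤ (u / (y - x)) ^ (1/q) := by
    intro x y hax hxy hyb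
    obtain ⟨s, hs, hmin⟩ := exists_min_pt (g := fun t => ‖F t‖ ^ q) hxy
      ((hFqc.mono hIcc).mono (fun z hz => ⟨hax.trans hz.1, hz.2.trans hyb⟩))
    refine ⟨s, hs, ?_⟩
    have h3 : ∫ t in x..y, ‖F t‖ ^ q ≤ u :=
      sub_integral_le hax hxy.le hyb (hFqc.mono hIcc)
        (fun t _ => Real.rpow_nonneg (norm_nonneg _) q)
    have h4 : ‖F s‖ ^ q ≤ u / (y - x) := by
      rw [le_div_iff₀ (by linarith)]
      exact hmin.trans h3
    calc ‖F s‖ = (‖F s‖ ^ q) ^ (1/q) := by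
          rw [one_div, Real.rpow_rpow_inv (norm_nonneg _) hq0.ne']
      _ ≤ (u / (y - x)) ^ (1/q) :=
          Real.rpow_le_rpow (Real.rpow_nonneg (norm_nonneg _) _) h4 h1q.le
  -- main target
  suffices h : ‖F b - F a‖ ≤ 4 * A0 ^ (1 - 1/q) * B0 ^ (1/q) by exact h
  rcases eq_or_lt_of_le hq with hq1 | hq1
  · -- q = 1
    have hB0q : B0 ^ (1/q) = B0 := by rw [← hq1]; norm_num
    have hA0e : A0 ^ (1 - 1/q) = 1 := by rw [← hq1]; norm_num
    rw [hB0q, hA0e, mul_one]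
    have h1 := claim1 a b le_rfl hab.le le_rfl
    have h2 : ((b:ℝ) - a) ^ (1 - 1/q) = 1 := by rw [← hq1]; norm_num
    rw [h2, one_mul] at h1
    nlinarith [hB00]
  have he' : (0:ℝ) < 1 - 1/q := by
    have : 1/q < 1 := by rw [div_lt_one hq0]; exact hq1
    linarith
  by_cases hv' : B0 = 0
  · have h1 : ‖F b - F a‖ ≤ (b - a) ^ (1 - 1/q) * B0 := claim1 a b le_rfl hab.le le_rfl
    rw [hv'] at h1
    simp only [mul_zero] at h1
    have h0 : ‖F b - F a‖ = 0 := le_antisymm h1 (norm_nonneg _)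
    rw [h0]
    positivity
  have hB0pos : 0 < B0 := lt_of_le_of_ne hB00 (Ne.symm hv')
  have h3 : (A0 / B0) ^ (1 - 1/q) * B0 = A0 ^ (1 - 1/q) * B0 ^ (1/q) := by
    have hBne : B0 ^ (1 - 1/q) ≠ 0 := (Real.rpow_pos_of_pos hB0pos _).ne'
    rw [Real.div_rpow hA00 hB00, div_mul_eq_mul_div, mul_div_assoc]
    congr 1
    rw [div_eq_iff hBne, ← Real.rpow_add hB0pos, show 1/q + (1 - 1/q) = 1 by ring,
      Real.rpow_one]
  by_cases hcase : b - a ≤ A0 / B0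
  · -- short interval
    have h1 : ‖F b - F a‖ ≤ (b - a) ^ (1 - 1/q) * B0 := claim1 a b le_rfl hab.le le_rfl
    have h2 : (b - a) ^ (1 - 1/q) ≤ (A0 / B0) ^ (1 - 1/q) :=
      Real.rpow_le_rpow (by linarith) hcase he'.le
    have h4 : A0 ^ (1 - 1/q) * B0 ^ (1/q) ≤ 4 * (A0 ^ (1 - 1/q) * B0 ^ (1/q)) := by
      nlinarith [Real.rpow_nonneg hA00 (1 - 1/q), Real.rpow_nonneg hB00 (1/q)]
    calc ‖F b - F a‖ ≤ (b - a) ^ (1 - 1/q) * B0 := h1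
      _ ≤ (A0 / B0) ^ (1 - 1/q) * B0 := mul_le_mul_of_nonneg_right h2 hB00
      _ = A0 ^ (1 - 1/q) * B0 ^ (1/q) := h3
      _ ≤ 4 * (A0 ^ (1 - 1/q) * B0 ^ (1/q)) := h4
      _ = 4 * A0 ^ (1 - 1/q) * B0 ^ (1/q) := by ring
  push_neg at hcase
  by_cases hA0' : A0 = 0
  · -- u = 0, long interval: limit argument
    have hu0' : u = 0 := by
      rw [hA0_def] at hA0'
      exact (Real.rpow_eq_zero hu0 h1q.ne').mp hA0'
    rw [hA0', Real.zero_rpow he'.ne', mul_zero, zero_mul]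
    by_contra hM
    push_neg at hM
    set M := ‖F b - F a‖ with hM_def
    set l' := min ((b - a)/2) ((M/(4*B0)) ^ (q/(q-1))) with hl'_def
    have hq1' : (0:ℝ) < q - 1 := by linarith
    have hMB : 0 < M/(4*B0) := div_pos hM (by linarith)
    have hl'pos : 0 < l' := lt_min (by linarith) (Real.rpow_pos_of_pos hMB _)
    have hl'lt : l' < b - a := lt_of_le_of_lt (min_le_left _ _) (by linarith)
    obtain ⟨s, hs, hFs⟩ := claim2 a (a + l') le_rfl (by linarith) (by linarith)
    obtain ⟨s', hs', hFs'⟩ := claim2 (b - l') b (by linarith) (by linarith) le_rfl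
    rw [hu0'] at hFs hFs'
    simp only [zero_div, Real.zero_rpow h1q.ne'] at hFs hFs'
    have hFs0 : F s = 0 := norm_le_zero_iff.mp hFs
    have hFs'0 : F s' = 0 := norm_le_zero_iff.mp hFs'
    have hsplit : F b - F a = (F b - F s') + (F s' - F s) + (F s - F a) := by ring
    have hb1 : ‖F b - F s'‖ ≤ (b - s') ^ (1 - 1/q) * B0 :=
      claim1 s' b (by linarith [hs'.1]) hs'.2 le_rfl
    have hb2 : ‖F s - F a‖ ≤ (s - a) ^ (1 - 1/q) * B0 :=
      claim1 a s le_rfl hs.1 (by linarith [hs.2])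
    have hmono1 : (b - s') ^ (1 - 1/q) ≤ l' ^ (1 - 1/q) :=
      Real.rpow_le_rpow (by linarith [hs'.2]) (by linarith [hs'.1]) he'.le
    have hmono2 : (s - a) ^ (1 - 1/q) ≤ l' ^ (1 - 1/q) :=
      Real.rpow_le_rpow (by linarith [hs.1]) (by linarith [hs.2]) he'.le
    have hmid : ‖F s' - F s‖ = 0 := by rw [hFs0, hFs'0]; simp
    have hMle : M ≤ 2 * l' ^ (1 - 1/q) * B0 := by
      calc M = ‖(F b - F s') + (F s' - F s) + (F s - F a)‖ := by rw [hM_def, hsplit]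
        _ ≤ ‖F b - F s'‖ + ‖F s' - F s‖ + ‖F s - F a‖ :=
            (norm_add_le _ _).trans (by gcongr; exact norm_add_le _ _)
        _ ≤ (b - s') ^ (1 - 1/q) * B0 + 0 + (s - a) ^ (1 - 1/q) * B0 := by
            rw [hmid]; gcongr
        _ ≤ l' ^ (1 - 1/q) * B0 + 0 + l' ^ (1 - 1/q) * B0 := by gcongr
        _ = 2 * l' ^ (1 - 1/q) * B0 := by ring
    have hkey : l' ^ (1 - 1/q) ≤ M/(4*B0) := by
      have h5 : l' ^ (1 - 1/q) ≤ ((M/(4*B0)) ^ (q/(q-1))) ^ (1 - 1/q) :=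
        Real.rpow_le_rpow hl'pos.le (min_le_right _ _) he'.le
      rwa [← Real.rpow_mul hMB.le, show q/(q-1) * (1 - 1/q) = 1 by field_simp,
        Real.rpow_one] at h5
    have : M ≤ M/2 := by
      calc M ≤ 2 * l' ^ (1 - 1/q) * B0 := hMle
        _ ≤ 2 * (M/(4*B0)) * B0 := by gcongr
        _ = M/2 := by field_simp; ring
    linarith
  · -- main case: 0 < A0, long interval
    have hA0pos : 0 < A0 := lt_of_le_of_ne hA00 (Ne.symm hA0')
    set l := A0 / B0 with hl_def
    have hlpos : 0 < l := div_pos hA0pos hB0pos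
    obtain ⟨s, hs, hFs⟩ := claim2 a (a + l) le_rfl (by linarith) (by linarith)
    obtain ⟨s', hs', hFs'⟩ := claim2 (b - l) b (by linarith) (by linarith) le_rfl
    have hul : (u / (a + l - a)) ^ (1/q) = A0 ^ (1 - 1/q) * B0 ^ (1/q) := by
      have hAq : A0 ^ q = u := by
        rw [hA0_def, ← Real.rpow_mul hu0, one_div, inv_mul_cancel₀ hq0.ne', Real.rpow_one]
      have h6 : u / (a + l - a) = A0 ^ (q - 1) * B0 := by
        rw [show a + l - a = l by ring, hl_def, ← hAq, Real.rpow_sub hA0pos, Real.rpow_one]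
        field_simp
      rw [h6, Real.mul_rpow (Real.rpow_nonneg hA00 _) hB00, ← Real.rpow_mul hA00]
      congr 2
      field_simp
    have hul' : (u / (b - (b - l))) ^ (1/q) = A0 ^ (1 - 1/q) * B0 ^ (1/q) := by
      rw [show b - (b - l) = a + l - a by ring]; exact hul
    rw [hul] at hFs
    rw [hul'] at hFs'
    have hsplit : F b - F a = (F b - F s') + (F s' - F s) + (F s - F a) := by ring
    have hb1 : ‖F b - F s'‖ ≤ (b - s') ^ (1 - 1/q) * B0 :=
      claim1 s' b (by linarith [hs'.1]) hs'.2 le_rfl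
    have hb2 : ‖F s - F a‖ ≤ (s - a) ^ (1 - 1/q) * B0 :=
      claim1 a s le_rfl hs.1 (by linarith [hs.2])
    have hmono1 : (b - s') ^ (1 - 1/q) * B0 ≤ A0 ^ (1 - 1/q) * B0 ^ (1/q) := by
      rw [← h3]
      have : (b - s') ^ (1 - 1/q) ≤ (A0/B0) ^ (1 - 1/q) :=
        Real.rpow_le_rpow (by linarith [hs'.2]) (by linarith [hs'.1]) he'.le
      exact mul_le_mul_of_nonneg_right this hB00
    have hmono2 : (s - a) ^ (1 - 1/q) * B0 ≤ A0 ^ (1 - 1/q) * B0 ^ (1/q) := by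
      rw [← h3]
      have : (s - a) ^ (1 - 1/q) ≤ (A0/B0) ^ (1 - 1/q) :=
        Real.rpow_le_rpow (by linarith [hs.1]) (by linarith [hs.2]) he'.le
      exact mul_le_mul_of_nonneg_right this hB00
    have hmid : ‖F s' - F s‖ ≤ 2 * (A0 ^ (1 - 1/q) * B0 ^ (1/q)) := by
      calc ‖F s' - F s‖ ≤ ‖F s'‖ + ‖F s‖ := norm_sub_le _ _
        _ ≤ A0 ^ (1 - 1/q) * B0 ^ (1/q) + A0 ^ (1 - 1/q) * B0 ^ (1/q) := add_le_add hFs' hFs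
        _ = 2 * (A0 ^ (1 - 1/q) * B0 ^ (1/q)) := by ring
    calc ‖F b - F a‖ = ‖(F b - F s') + (F s' - F s) + (F s - F a)‖ := by rw [hsplit]
      _ ≤ ‖F b - F s'‖ + ‖F s' - F s‖ + ‖F s - F a‖ :=
          (norm_add_le _ _).trans (by gcongr; exact norm_add_le _ _)
      _ ≤ A0 ^ (1 - 1/q) * B0 ^ (1/q) + 2 * (A0 ^ (1 - 1/q) * B0 ^ (1/q))
          + A0 ^ (1 - 1/q) * B0 ^ (1/q) := by
          exact add_le_add (add_le_add (hb1.trans hmono1) hmid) (hb2.trans hmono2)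
      _ = 4 * A0 ^ (1 - 1/q) * B0 ^ (1/q) := by ring

lemma vq_zero (hq0 : 0 < q) (h : ∀ x y : ℝ, 0 < x → x ≤ y → F x = F y) :
    vqNorm q F = 0 := by
  refine le_antisymm ?_ zero_le
  refine iSup_le fun L => iSup_le fun t => iSup_le fun hmono => iSup_le fun hpos => ?_
  have hz : ∀ i : Fin L, ‖F (t i.succ) - F (t i.castSucc)‖ ^ q = 0 := by
    intro i
    rw [h (t i.castSucc) (t i.succ) (hpos _)
      (hmono.monotone (Fin.castSucc_lt_succ (i := i)).le)]
    simp [Real.zero_rpow hq0.ne']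
  rw [Finset.sum_congr rfl (fun i _ => hz i), Finset.sum_const, smul_zero,
    Real.zero_rpow (one_div_ne_zero hq0.ne')]
  simp

lemma lint_norm_eq {f : ℝ → ℂ} (hq0 : 0 < q)
    (hint : IntegrableOn (fun s => ‖f s‖ ^ q) (Set.Ioi 0) volume) :
    ∫⁻ s in Set.Ioi 0, (‖f s‖₊ : ℝ≥0∞) ^ q
      = ENNReal.ofReal (∫ s in Set.Ioi 0, ‖f s‖ ^ q) := by
  rw [MeasureTheory.ofReal_integral_eq_lintegral_ofReal hint
    (Filter.Eventually.of_forall fun s => Real.rpow_nonneg (norm_nonneg _) q)]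
  refine lintegral_congr fun s => ?_
  rw [← enorm_eq_nnnorm, ← ofReal_norm, ENNReal.ofReal_rpow_of_nonneg (norm_nonneg _) hq0.le]

lemma eLp_eq {f : ℝ → ℂ} (hq : 1 ≤ q)
    (hint : IntegrableOn (fun s => ‖f s‖ ^ q) (Set.Ioi 0) volume) :
    eLpNorm f (ENNReal.ofReal q) (volume.restrict (Set.Ioi 0))
      = ENNReal.ofReal ((∫ s in Set.Ioi 0, ‖f s‖ ^ q) ^ (1/q)) := by
  have hq0 : (0:ℝ) < q := lt_of_lt_of_le zero_lt_one hq
  have h0 : ENNReal.ofReal q ≠ 0 := by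
    simp [ENNReal.ofReal_eq_zero]; linarith
  have htop : ENNReal.ofReal q ≠ ⊤ := ENNReal.ofReal_ne_top
  have hl : ∫⁻ s in Set.Ioi 0, ‖f s‖ₑ ^ q = ENNReal.ofReal (∫ s in Set.Ioi 0, ‖f s‖ ^ q) :=
    lint_norm_eq hq0 hint
  rw [eLpNorm_eq_lintegral_rpow_enorm_toReal h0 htop, ENNReal.toReal_ofReal hq0.le,
    hl,
    ← ENNReal.ofReal_rpow_of_nonneg (setIntegral_nonneg measurableSet_Ioi
      (fun s _ => Real.rpow_nonneg (norm_nonneg _) q)) (one_div_pos.mpr hq0).le]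

lemma core (hq : 1 ≤ q) (hF : ContDiffOn ℝ 1 F (Set.Ioi 0))
    (hBint : IntegrableOn (fun s => ‖deriv F s‖ ^ q) (Set.Ioi 0) volume)
    (hAcase : q = 1 ∨ IntegrableOn (fun s => ‖F s‖ ^ q) (Set.Ioi 0) volume) :
    vqNorm q F ≤ ENNReal.ofReal 4 *
      eLpNorm F (ENNReal.ofReal q) (volume.restrict (Set.Ioi 0)) ^ (1 - 1/q) *
      eLpNorm (deriv F) (ENNReal.ofReal q) (volume.restrict (Set.Ioi 0)) ^ (1/q) := by
  have hq0 : (0:ℝ) < q := lt_of_lt_of_le zero_lt_one hq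
  have h1q : (0:ℝ) < 1/q := one_div_pos.mpr hq0
  have he : (0:ℝ) ≤ 1 - 1/q := by
    have : 1/q ≤ 1 := by rw [div_le_one hq0]; exact hq
    linarith
  have hFc : ContinuousOn F (Set.Ioi 0) := hF.continuousOn
  have hFqc : ContinuousOn (fun s => ‖F s‖ ^ q) (Set.Ioi 0) :=
    hFc.norm.rpow_const (fun x _ => Or.inr hq0.le)
  have hFpqc : ContinuousOn (fun s => ‖deriv F s‖ ^ q) (Set.Ioi 0) :=
    (my_derivCont hF).norm.rpow_const (fun x _ => Or.inr hq0.le)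
  set IA := ∫ s in Set.Ioi 0, ‖F s‖ ^ q with hIA_def
  set IB := ∫ s in Set.Ioi 0, ‖deriv F s‖ ^ q with hIB_def
  have hIA0 : 0 ≤ IA := setIntegral_nonneg measurableSet_Ioi
    (fun s _ => Real.rpow_nonneg (norm_nonneg _) q)
  have hIB0 : 0 ≤ IB := setIntegral_nonneg measurableSet_Ioi
    (fun s _ => Real.rpow_nonneg (norm_nonneg _) q)
  refine iSup_le fun L => iSup_le fun t => iSup_le fun hmono => iSup_le fun hpos => ?_
  -- real-valued estimate
  set u : Fin L → ℝ := fun i => ∫ s in (t i.castSucc)..(t i.succ), ‖F s‖ ^ q with hu_def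
  set v : Fin L → ℝ := fun i => ∫ s in (t i.castSucc)..(t i.succ), ‖deriv F s‖ ^ q with hv_def
  have hu0 : ∀ i, 0 ≤ u i := fun i => intervalIntegral.integral_nonneg
    (hmono.monotone (Fin.castSucc_lt_succ (i := i)).le)
    (fun s _ => Real.rpow_nonneg (norm_nonneg _) q)
  have hv0 : ∀ i, 0 ≤ v i := fun i => intervalIntegral.integral_nonneg
    (hmono.monotone (Fin.castSucc_lt_succ (i := i)).le)
    (fun s _ => Real.rpow_nonneg (norm_nonneg _) q)
  have halg : ∀ x y : ℝ, 0 ≤ x → 0 ≤ y →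
      (4 * (x ^ ((1:ℝ)/q)) ^ (1 - 1/q) * (y ^ ((1:ℝ)/q)) ^ ((1:ℝ)/q)) ^ q
        = 4 ^ q * (x ^ (1 - 1/q) * y ^ ((1:ℝ)/q)) := by
    intro x y hx hy
    rw [Real.mul_rpow
        (mul_nonneg (by norm_num) (Real.rpow_nonneg (Real.rpow_nonneg hx _) _))
        (Real.rpow_nonneg (Real.rpow_nonneg hy _) _),
      Real.mul_rpow (by norm_num) (Real.rpow_nonneg (Real.rpow_nonneg hx _) _),
      ← Real.rpow_mul (Real.rpow_nonneg hx _), ← Real.rpow_mul hx,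
      ← Real.rpow_mul (Real.rpow_nonneg hy _), ← Real.rpow_mul hy,
      show 1/q * ((1 - 1/q) * q) = 1 - 1/q by field_simp,
      show 1/q * (1/q * q) = 1/q by field_simp]
    ring
  have hkey : ∀ i : Fin L, ‖F (t i.succ) - F (t i.castSucc)‖ ^ q
      ≤ 4 ^ q * ((u i) ^ (1 - 1/q) * (v i) ^ (1/q)) := by
    intro i
    have h1 := key_interval hq hF (hpos i.castSucc) (hmono (Fin.castSucc_lt_succ (i := i)))
    have h2 : ‖F (t i.succ) - F (t i.castSucc)‖ ^ q
        ≤ (4 * ((u i) ^ ((1:ℝ)/q)) ^ (1 - 1/q) * ((v i) ^ ((1:ℝ)/q)) ^ ((1:ℝ)/q)) ^ q :=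
      Real.rpow_le_rpow (norm_nonneg _) h1 hq0.le
    rwa [halg (u i) (v i) (hu0 i) (hv0 i)] at h2
  have hsum : ∑ i : Fin L, ‖F (t i.succ) - F (t i.castSucc)‖ ^ q
      ≤ 4 ^ q * (IA ^ (1 - 1/q) * IB ^ (1/q)) := by
    calc ∑ i : Fin L, ‖F (t i.succ) - F (t i.castSucc)‖ ^ q
        ≤ ∑ i : Fin L, 4 ^ q * ((u i) ^ (1 - 1/q) * (v i) ^ (1/q)) :=
          Finset.sum_le_sum fun i _ => hkey i
      _ = 4 ^ q * ∑ i : Fin L, (u i) ^ (1 - 1/q) * (v i) ^ (1/q) := by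
          rw [Finset.mul_sum]
      _ ≤ 4 ^ q * ((∑ i, u i) ^ (1 - 1/q) * (∑ i, v i) ^ (1/q)) := by
          have := sum_holder hq u v hu0 hv0
          have h4 : (0:ℝ) ≤ 4 ^ q := Real.rpow_nonneg (by norm_num) q
          exact mul_le_mul_of_nonneg_left this h4
      _ ≤ 4 ^ q * (IA ^ (1 - 1/q) * IB ^ (1/q)) := by
          have h4 : (0:ℝ) ≤ 4 ^ q := Real.rpow_nonneg (by norm_num) q
          have hvle : (∑ i, v i) ^ ((1:ℝ)/q) ≤ IB ^ (1/q) := by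
            refine Real.rpow_le_rpow (Finset.sum_nonneg fun i _ => hv0 i) ?_ h1q.le
            exact sum_interval_le hFpqc (fun s _ => Real.rpow_nonneg (norm_nonneg _) q)
              hBint hmono hpos
          have hule : (∑ i, u i) ^ (1 - (1:ℝ)/q) ≤ IA ^ (1 - 1/q) := by
            rcases hAcase with hq1 | hAint
            · rw [hq1]; norm_num
            · refine Real.rpow_le_rpow (Finset.sum_nonneg fun i _ => hu0 i) ?_ he
              exact sum_interval_le hFqc (fun s _ => Real.rpow_nonneg (norm_nonneg _) q)
                hAint hmono hpos
          refine mul_le_mul_of_nonneg_left ?_ h4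
          exact mul_le_mul hule hvle (Real.rpow_nonneg
            (Finset.sum_nonneg fun i _ => hv0 i) _) (Real.rpow_nonneg hIA0 _)
  have hS : (∑ i : Fin L, ‖F (t i.succ) - F (t i.castSucc)‖ ^ q) ^ ((1:ℝ)/q)
      ≤ 4 * (IA ^ ((1 - 1/q) * (1/q)) * IB ^ ((1/q) * (1/q))) := by
    have hsum0 : 0 ≤ ∑ i : Fin L, ‖F (t i.succ) - F (t i.castSucc)‖ ^ q :=
      Finset.sum_nonneg fun i _ => Real.rpow_nonneg (norm_nonneg _) q
    have h2 := Real.rpow_le_rpow hsum0 hsum h1q.le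
    refine h2.trans (le_of_eq ?_)
    rw [Real.mul_rpow (Real.rpow_nonneg (by norm_num) _)
      (mul_nonneg (Real.rpow_nonneg hIA0 _) (Real.rpow_nonneg hIB0 _)),
      Real.mul_rpow (Real.rpow_nonneg hIA0 _) (Real.rpow_nonneg hIB0 _),
      ← Real.rpow_mul (by norm_num : (0:ℝ) ≤ 4), mul_one_div, div_self hq0.ne',
      Real.rpow_one, ← Real.rpow_mul hIA0, ← Real.rpow_mul hIB0]
  -- pass to ℝ≥0∞
  refine le_trans (ENNReal.ofReal_le_ofReal hS) ?_
  rw [ENNReal.ofReal_mul (by norm_num), ENNReal.ofReal_mul (Real.rpow_nonneg hIA0 _)]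
  rw [mul_assoc]
  refine mul_le_mul' (le_refl _) ?_
  have hBside : ENNReal.ofReal (IB ^ ((1/q) * (1/q)))
      = eLpNorm (deriv F) (ENNReal.ofReal q) (volume.restrict (Set.Ioi 0)) ^ (1/q) := by
    rw [eLp_eq hq hBint, ENNReal.ofReal_rpow_of_nonneg (Real.rpow_nonneg hIB0 _) h1q.le,
      ← Real.rpow_mul hIB0]
  have hAside : ENNReal.ofReal (IA ^ ((1 - 1/q) * (1/q)))
      ≤ eLpNorm F (ENNReal.ofReal q) (volume.restrict (Set.Ioi 0)) ^ (1 - 1/q) := by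
    rcases hAcase with hq1 | hAint
    · rw [hq1]
      norm_num
    · rw [eLp_eq hq hAint, ENNReal.ofReal_rpow_of_nonneg (Real.rpow_nonneg hIA0 _) he,
        ← Real.rpow_mul hIA0, mul_comm ((1:ℝ)/q) (1 - 1/q)]
  rw [hBside]
  exact mul_le_mul' hAside (le_refl _)

end VqHelpers

theorem variation_sobolev_embedding (q : ℝ) (hq : 1 ≤ q) :
    ∃ C > 0, ∀ F : ℝ → ℂ, ContDiffOn ℝ 1 F (Set.Ioi 0) →
      vqNorm q F ≤ ENNReal.ofReal C *
        eLpNorm F (ENNReal.ofReal q) (volume.restrict (Set.Ioi 0)) ^ (1 - 1 / q) *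
        eLpNorm (deriv F) (ENNReal.ofReal q) (volume.restrict (Set.Ioi 0)) ^ (1 / q) := by
  refine ⟨4, by norm_num, fun F hF => ?_⟩
  have hq0 : (0:ℝ) < q := lt_of_lt_of_le zero_lt_one hq
  have h1q : (0:ℝ) < 1/q := one_div_pos.mpr hq0
  have he : (0:ℝ) ≤ 1 - 1/q := by
    have : 1/q ≤ 1 := by rw [div_le_one hq0]; exact hq
    linarith
  have hp0 : ENNReal.ofReal q ≠ 0 := by
    simp only [Ne, ENNReal.ofReal_eq_zero, not_le]; linarith
  have hptop : ENNReal.ofReal q ≠ ⊤ := ENNReal.ofReal_ne_top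
  have h40 : ENNReal.ofReal 4 ≠ 0 := by
    simp only [Ne, ENNReal.ofReal_eq_zero, not_le]; norm_num
  have hFc : ContinuousOn F (Set.Ioi 0) := hF.continuousOn
  have hFm : AEStronglyMeasurable F (volume.restrict (Set.Ioi 0)) :=
    hFc.aestronglyMeasurable measurableSet_Ioi
  have hFpc := my_derivCont hF
  have hFpm : AEStronglyMeasurable (deriv F) (volume.restrict (Set.Ioi 0)) :=
    hFpc.aestronglyMeasurable measurableSet_Ioi
  have hclos : Set.Ioi (0:ℝ) ⊆ closure (interior (Set.Ioi 0)) := by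
    rw [isOpen_Ioi.interior_eq]; exact subset_closure
  by_cases hBtop : eLpNorm (deriv F) (ENNReal.ofReal q) (volume.restrict (Set.Ioi 0)) = ⊤
  · rcases eq_or_lt_of_le hq with hq1 | hq1
    · -- q = 1
      have e0 : (1:ℝ) - 1/q = 0 := by rw [← hq1]; norm_num
      have e1 : (1:ℝ)/q = 1 := by rw [← hq1]; norm_num
      rw [hBtop, e0, e1, ENNReal.rpow_zero, ENNReal.rpow_one, mul_one,
        ENNReal.mul_top h40]
      exact le_top
    · by_cases hA0 : eLpNorm F (ENNReal.ofReal q) (volume.restrict (Set.Ioi 0)) = 0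
      · have hae : F =ᵐ[volume.restrict (Set.Ioi 0)] 0 := (eLpNorm_eq_zero_iff hFm hp0).mp hA0
        have heq : Set.EqOn F 0 (Set.Ioi 0) :=
          Measure.eqOn_of_ae_eq hae hFc continuousOn_const hclos
        rw [vq_zero hq0 (fun x y hx hxy => by
          rw [heq (Set.mem_Ioi.mpr hx), heq (Set.mem_Ioi.mpr (lt_of_lt_of_le hx hxy))]; rfl)]
        exact zero_le
      · have hBq : eLpNorm (deriv F) (ENNReal.ofReal q) (volume.restrict (Set.Ioi 0))
            ^ ((1:ℝ)/q) = ⊤ := by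
          rw [hBtop]; exact ENNReal.top_rpow_of_pos h1q
        have hAq : eLpNorm F (ENNReal.ofReal q) (volume.restrict (Set.Ioi 0))
            ^ (1 - 1/q) ≠ 0 := by
          intro h
          rcases ENNReal.rpow_eq_zero_iff.mp h with ⟨h1, _⟩ | ⟨_, h2⟩
          · exact hA0 h1
          · linarith
        rw [hBq, ENNReal.mul_top (mul_ne_zero h40 hAq)]
        exact le_top
  · have hBlt : eLpNorm (deriv F) (ENNReal.ofReal q) (volume.restrict (Set.Ioi 0)) < ⊤ :=
      lt_top_iff_ne_top.mpr hBtop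
    have hBint : IntegrableOn (fun s => ‖deriv F s‖ ^ q) (Set.Ioi 0) volume := by
      have hmem : MemLp (deriv F) (ENNReal.ofReal q) (volume.restrict (Set.Ioi 0)) :=
        ⟨hFpm, hBlt⟩
      have h2 := hmem.integrable_norm_rpow hp0 hptop
      rwa [ENNReal.toReal_ofReal hq0.le] at h2
    rcases eq_or_lt_of_le hq with hq1 | hq1
    · exact core hq hF hBint (Or.inl hq1.symm)
    by_cases hAtop : eLpNorm F (ENNReal.ofReal q) (volume.restrict (Set.Ioi 0)) = ⊤
    · by_cases hB0 : eLpNorm (deriv F) (ENNReal.ofReal q) (volume.restrict (Set.Ioi 0)) = 0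
      · have hae : deriv F =ᵐ[volume.restrict (Set.Ioi 0)] 0 :=
          (eLpNorm_eq_zero_iff hFpm hp0).mp hB0
        have heq : Set.EqOn (deriv F) 0 (Set.Ioi 0) :=
          Measure.eqOn_of_ae_eq hae hFpc continuousOn_const hclos
        have hconst : ∀ x y : ℝ, 0 < x → x ≤ y → F x = F y := by
          intro x y hx hxy
          have h1 : ‖F y - F x‖ ≤ ∫ t in x..y, ‖deriv F t‖ := ftc_bound hF hx hxy
          have h2 : ∫ t in x..y, ‖deriv F t‖ = 0 := by
            rw [intervalIntegral.integral_congr (g := fun _ => (0:ℝ)) (fun s hs => by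
              rw [Set.uIcc_of_le hxy] at hs
              have : deriv F s = 0 := heq (Set.mem_Ioi.mpr (lt_of_lt_of_le hx hs.1))
              simp [this])]
            simp
          have h3 : F y - F x = 0 := norm_le_zero_iff.mp (h2 ▸ h1)
          exact (sub_eq_zero.mp h3).symm
        rw [vq_zero hq0 hconst]
        exact zero_le
      · have hAq : eLpNorm F (ENNReal.ofReal q) (volume.restrict (Set.Ioi 0))
            ^ (1 - 1/q) = ⊤ := by
          rw [hAtop]; exact ENNReal.top_rpow_of_pos (by
            have : 1/q < 1 := by rw [div_lt_one hq0]; exact hq1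
            linarith)
        have hBq : eLpNorm (deriv F) (ENNReal.ofReal q) (volume.restrict (Set.Ioi 0))
            ^ ((1:ℝ)/q) ≠ 0 := by
          intro h
          rcases ENNReal.rpow_eq_zero_iff.mp h with ⟨h1, _⟩ | ⟨_, h2⟩
          · exact hB0 h1
          · linarith
        rw [hAq, ENNReal.mul_top h40, ENNReal.top_mul hBq]
        exact le_top
    · have hAint : IntegrableOn (fun s => ‖F s‖ ^ q) (Set.Ioi 0) volume := by
        have hmem : MemLp F (ENNReal.ofReal q) (volume.restrict (Set.Ioi 0)) :=
          ⟨hFm, lt_top_iff_ne_top.mpr hAtop⟩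
        have h2 := hmem.integrable_norm_rpow hp0 hptop
        rwa [ENNReal.toReal_ofReal hq0.le] at h2
      exact core hq hF hBint (Or.inr hAint)
end
end
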